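/- arXiv:1708.04406 — 8 statements merged into one kernel-verified Lean document; each statement's English description precedes it below -/
import Mathlib

section
/- Let H be the 7-vertex graph obtained from the triangular prism by subdividing one edge that lies in no triangle, and let s denote its unique vertex of degree 2. Let G be the graph consisting of two disjoint copies H₁ and H₂ of H together with one edge joining the degree-2 vertex of H₁ to the degree-2 vertex of H₂. Then G is a cubic (3-regular) graph on 14 vertices and the chromatic number of its square G² equals 7. -/
/-- The square of a graph: two distinct vertices are adjacent iff their
distance in `G` is at most 2 (adjacent, or having a common neighbor). -/
def graphSquare {V : Type*} (G : SimpleGraph V) : SimpleGraph V where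
  Adj u v := u ≠ v ∧ (G.Adj u v ∨ ∃ w, G.Adj u w ∧ G.Adj w v)
  symm := by
    constructor
    rintro u v ⟨hne, h | ⟨w, h1, h2⟩⟩
    · exact ⟨hne.symm, Or.inl h.symm⟩
    · exact ⟨hne.symm, Or.inr ⟨w, h2.symm, h1.symm⟩⟩
  loopless := by constructor; rintro u ⟨hne, -⟩; exact hne rfl

/-- The edges of the graph `H` obtained from the triangular prism with
vertices `a = 0, b = 1, c = 2, a' = 3, b' = 4, c' = 5` (triangles `a b c`
and `a' b' c'`, matching edges `a a'`, `b b'`, `c c'`) by subdividing the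
edge `a a'` (which lies in no triangle) with a new vertex `s = 6`;
the vertex `s = 6` is the unique vertex of degree 2. -/
def subdividedPrismEdges : List (Fin 7 × Fin 7) :=
  [(0, 1), (1, 2), (2, 0), (3, 4), (4, 5), (5, 3), (1, 4), (2, 5), (0, 6), (6, 3)]

/-- The triangular prism with the edge `a a'` subdivided by the vertex `s = 6`. -/
def subdividedPrism : SimpleGraph (Fin 7) where
  Adj u v := (u, v) ∈ subdividedPrismEdges ∨ (v, u) ∈ subdividedPrismEdges
  symm := ⟨fun _ _ h => h.symm⟩
  loopless := ⟨fun u => by fin_cases u <;> decide⟩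

instance : DecidableRel subdividedPrism.Adj := fun u v =>
  decidable_of_iff ((u, v) ∈ subdividedPrismEdges ∨ (v, u) ∈ subdividedPrismEdges) Iff.rfl

/-- Two disjoint copies of the subdivided prism, joined by one edge between
the two degree-2 vertices (the vertices `s = 6` of the two copies). -/
def twoPrisms : SimpleGraph (Fin 7 ⊕ Fin 7) where
  Adj u v :=
    match u, v with
    | .inl a, .inl b => subdividedPrism.Adj a b
    | .inr a, .inr b => subdividedPrism.Adj a b
    | .inl a, .inr b => a = 6 ∧ b = 6
    | .inr a, .inl b => a = 6 ∧ b = 6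
  symm := by
    constructor
    rintro (a | a) (b | b) h
    · exact subdividedPrism.symm.symm _ _ h
    · exact ⟨h.2, h.1⟩
    · exact ⟨h.2, h.1⟩
    · exact subdividedPrism.symm.symm _ _ h
  loopless := by
    constructor
    rintro (a | a) h
    · exact subdividedPrism.loopless.irrefl a h
    · exact subdividedPrism.loopless.irrefl a h

instance : DecidableRel twoPrisms.Adj := fun u v =>
  match u, v with
  | .inl a, .inl b => inferInstanceAs (Decidable (subdividedPrism.Adj a b))
  | .inr a, .inr b => inferInstanceAs (Decidable (subdividedPrism.Adj a b))
  | .inl a, .inr b => inferInstanceAs (Decidable (a = 6 ∧ b = 6))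
  | .inr a, .inl b => inferInstanceAs (Decidable (a = 6 ∧ b = 6))

instance : DecidableRel (graphSquare twoPrisms).Adj := fun u v =>
  inferInstanceAs (Decidable (u ≠ v ∧ (twoPrisms.Adj u v ∨ ∃ w, twoPrisms.Adj u w ∧ twoPrisms.Adj w v)))

def myCol : Fin 7 ⊕ Fin 7 → Fin 7
  | .inl i => i
  | .inr i => ![0, 2, 4, 3, 5, 6, 1] i

lemma myCol_valid : ∀ u v, (graphSquare twoPrisms).Adj u v → myCol u ≠ myCol v := by decide

lemma inl_clique : ∀ i j : Fin 7, i ≠ j → (graphSquare twoPrisms).Adj (.inl i) (.inl j) := by decide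

/-- The graph `G` made of two disjoint copies of the subdivided prism joined by
an edge between their degree-2 vertices is a cubic graph on 14 vertices whose
square has chromatic number 7. -/
theorem twoPrisms_cubic_card_and_chromaticNumber_square :
    Fintype.card (Fin 7 ⊕ Fin 7) = 14 ∧
      twoPrisms.IsRegularOfDegree 3 ∧
      (graphSquare twoPrisms).chromaticNumber = 7 := by
  refine ⟨by decide, fun v => by fin_cases v <;> rfl, ?_⟩
  have h7 : (graphSquare twoPrisms).Colorable 7 :=
    ⟨SimpleGraph.Coloring.mk myCol fun h => myCol_valid _ _ h⟩
  refine le_antisymm (h7.chromaticNumber_le) ?_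
  by_contra h
  push_neg at h
  have h6 : (graphSquare twoPrisms).chromaticNumber ≤ (6 : ℕ) := by
    have : (7 : ℕ∞) = 6 + 1 := by norm_num
    rw [this, ENat.lt_add_one_iff (by simp)] at h
    exact_mod_cast h
  obtain ⟨C⟩ := SimpleGraph.chromaticNumber_le_iff_colorable.mp h6
  have hinj : Function.Injective (fun i : Fin 7 => C (.inl i)) := by
    intro i j hij
    by_contra hne
    exact C.valid (inl_clique i j hne) hij
  have := Fintype.card_le_of_injective _ hinj
  simp at this
end

section
/- Let n ≥ 5 with n ≡ 2 (mod 3). Then for every vertex v of the cycle graph C_n, the subgraph of the square (C_n)² induced on the remaining n − 1 vertices is not 3-colorable. (This is the assertion that in the square of a 'forbidden cycle' of length n ≡ 2 (mod 3) with exactly one non-blue vertex, the blue vertices cannot be properly colored with three colors.) -/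
open scoped Fin.NatCast Fin.CommRing

private lemma sq_aux_ne (m : ℕ) (v : Fin (m+5)) (j d : ℕ) (hd : d % (m+5) ≠ 0) :
    v + (j : Fin (m+5)) ≠ v + ((j+d : ℕ) : Fin (m+5)) := by
  intro h
  apply hd
  have := add_left_cancel h
  push_cast at this
  have : (d : Fin (m+5)) = 0 := by linear_combination -this
  simpa [Fin.ext_iff] using this

private lemma sq_aux_adj (m : ℕ) (v : Fin (m+5)) (j : ℕ) :
    (SimpleGraph.cycleGraph (m+5)).Adj (v + (j:Fin (m+5))) (v + ((j+1:ℕ):Fin (m+5))) := by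
  rw [show (m+5) = (m+3)+2 by ring] at *
  rw [SimpleGraph.cycleGraph_adj]
  right
  push_cast
  ring

/-- For `n ≥ 5` with `n ≡ 2 (mod 3)`, deleting any one vertex from the square
of the cycle `C_n` leaves a graph (induced on the remaining `n - 1` vertices)
that is not `3`-colorable. -/
theorem not_colorable_three_square_cycleGraph_delete_vertex
    (n : ℕ) (hn : 5 ≤ n) (hmod : n % 3 = 2) (v : Fin n) :
    ¬ ((graphSquare (SimpleGraph.cycleGraph n)).induce ({v}ᶜ : Set (Fin n))).Colorable 3 := by
  obtain ⟨m, rfl⟩ : ∃ m, n = m + 5 := ⟨n - 5, by omega⟩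
  rintro ⟨C⟩
  set w : ℕ → Fin (m+5) := fun j => v + (j : Fin (m+5)) with hw
  have hne : ∀ j d : ℕ, d % (m+5) ≠ 0 → w j ≠ w (j + d) := fun j d hd =>
    sq_aux_ne m v j d hd
  have hms : ∀ d : ℕ, 0 < d → d < m + 5 → d % (m+5) ≠ 0 := by
    intro d h1 h2
    rw [Nat.mod_eq_of_lt h2]
    omega
  have hadj1 : ∀ j : ℕ, (SimpleGraph.cycleGraph (m+5)).Adj (w j) (w (j + 1)) := fun j =>
    sq_aux_adj m v j
  have hsq1 : ∀ j : ℕ, (graphSquare (SimpleGraph.cycleGraph (m+5))).Adj (w j) (w (j + 1)) := by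
    intro j
    exact ⟨hne j 1 (hms 1 (by omega) (by omega)), Or.inl (hadj1 j)⟩
  have hsq2 : ∀ j : ℕ, (graphSquare (SimpleGraph.cycleGraph (m+5))).Adj (w j) (w (j + 2)) := by
    intro j
    refine ⟨hne j 2 (hms 2 (by omega) (by omega)), Or.inr ⟨w (j + 1), hadj1 j, ?_⟩⟩
    have := hadj1 (j + 1)
    rwa [show j + 1 + 1 = j + 2 by ring] at this
  have hwv : w 0 = v := by simp [hw]
  have hwn : w (m+5) = v := by
    simp only [hw]
    have : ((m+5 : ℕ) : Fin (m+5)) = 0 := by simp [Fin.ext_iff]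
    simp [this]
  have hsqC : (graphSquare (SimpleGraph.cycleGraph (m+5))).Adj (w 1) (w (m + 4)) := by
    refine ⟨?_, Or.inr ⟨v, ?_, ?_⟩⟩
    · have := hne 1 (m + 3) (hms (m+3) (by omega) (by omega))
      rwa [show 1 + (m + 3) = m + 4 by omega] at this
    · have := (hadj1 0).symm
      rw [hwv] at this
      rwa [show (0:ℕ) + 1 = 1 by norm_num] at this
    · have := hadj1 (m + 4)
      have e : w (m + 4 + 1) = w (m + 5) := congrArg w (by omega)
      rw [e, hwn] at this
      exact this.symm
  have hmem : ∀ i : ℕ, w (i % (m + 4) + 1) ∈ ({v}ᶜ : Set (Fin (m+5))) := by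
    intro i
    have h : w 0 ≠ w (0 + (i % (m + 4) + 1)) :=
      hne 0 (i % (m + 4) + 1)
        (hms _ (by omega) (by have := Nat.mod_lt i (show 0 < m + 4 by omega); omega))
    rw [hwv] at h
    simpa using (Ne.symm (by simpa using h))
  set c : ℕ → Fin 3 := fun i => C ⟨w (i % (m + 4) + 1), hmem i⟩ with hc
  have hceq : ∀ i (hi : i ≤ m + 3), c i = C ⟨w (i + 1), by
      have := hmem i; rwa [Nat.mod_eq_of_lt (by omega)] at this⟩ := by
    intro i hi
    simp only [hc]
    congr 2
    simp [Nat.mod_eq_of_lt (show i < m + 4 by omega)]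
  have hvalid : ∀ (a b : Fin (m+5)) (ha : a ∈ ({v}ᶜ : Set (Fin (m+5))))
      (hb : b ∈ ({v}ᶜ : Set (Fin (m+5)))),
      (graphSquare (SimpleGraph.cycleGraph (m+5))).Adj a b → C ⟨a, ha⟩ ≠ C ⟨b, hb⟩ := by
    intro a b ha hb hab
    exact C.valid hab
  have hd1 : ∀ i, i + 1 ≤ m + 3 → c i ≠ c (i + 1) := by
    intro i hi
    rw [hceq i (by omega), hceq (i + 1) hi]
    exact hvalid _ _ _ _ (hsq1 (i + 1))
  have hd2 : ∀ i, i + 2 ≤ m + 3 → c i ≠ c (i + 2) := by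
    intro i hi
    rw [hceq i (by omega), hceq (i + 2) hi]
    exact hvalid _ _ _ _ (by have := hsq2 (i + 1); rwa [show i + 1 + 2 = i + 2 + 1 by ring] at this)
  have pigeon : ∀ x y a b : Fin 3, x ≠ a → x ≠ b → y ≠ a → y ≠ b → a ≠ b → x = y := by decide
  have hper : ∀ i, i + 3 ≤ m + 3 → c (i + 3) = c i := by
    intro i hi
    have e1 : c (i + 1) ≠ c (i + 2) := by
      have := hd1 (i + 1) (by omega); rwa [show i + 1 + 1 = i + 2 by ring] at this
    have e2 : c (i + 1) ≠ c (i + 3) := by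
      have := hd2 (i + 1) (by omega); rwa [show i + 1 + 2 = i + 3 by ring] at this
    have e3 : c (i + 2) ≠ c (i + 3) := by
      have := hd1 (i + 2) (by omega); rwa [show i + 2 + 1 = i + 3 by ring] at this
    exact pigeon _ _ _ _ e2.symm e3.symm (hd1 i (by omega)) (hd2 i (by omega)) e1
  have hmul : ∀ k, 3 * k ≤ m + 3 → c (3 * k) = c 0 := by
    intro k
    induction k with
    | zero => intro _; rfl
    | succ k ih =>
      intro hk
      have := hper (3 * k) (by omega)
      rw [show 3 * (k + 1) = 3 * k + 3 by ring, this]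
      exact ih (by omega)
  obtain ⟨k, hk⟩ : ∃ k, m + 3 = 3 * k := ⟨(m + 3) / 3, by omega⟩
  have hfin : c (m + 3) = c 0 := by rw [hk]; exact hmul k (by omega)
  have : c 0 ≠ c (m + 3) := by
    rw [hceq 0 (by omega), hceq (m + 3) (le_refl _)]
    exact hvalid _ _ _ _ (by rw [show (0:ℕ) + 1 = 1 by norm_num, show m + 3 + 1 = m + 4 by omega]; exact hsqC)
  exact this hfin.symm
end

section
/- Let n ≥ 4 with n ≡ 1 (mod 3). Then for every vertex v of the cycle graph C_n, the subgraph of the square (C_n)² induced on the remaining n − 1 vertices is 3-colorable. (This shows that a 'dangerous cycle' of length n ≡ 1 (mod 3), all but one of whose vertices are blue, is not forbidden: its blue vertices can still be properly 3-colored in the square.) -/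
private lemma fin_sub_val {n : ℕ} (hn : 0 < n) (x y : Fin n) :
    (y.val ≤ x.val ∧ (x - y).val = x.val - y.val) ∨
      (x.val < y.val ∧ (x - y).val = x.val + n - y.val) := by
  have hx := x.isLt
  have hy := y.isLt
  rw [Fin.sub_def]
  simp only
  rcases le_or_gt y.val x.val with h | h
  · left
    refine ⟨h, ?_⟩
    have h1 : n - y.val + x.val = n + (x.val - y.val) := by omega
    rw [h1, Nat.add_mod_left, Nat.mod_eq_of_lt (by omega)]
  · right
    refine ⟨h, ?_⟩
    rw [Nat.mod_eq_of_lt (by omega)]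
    omega

/-- For `n ≥ 4` with `n ≡ 1 (mod 3)`, deleting any one vertex from the square
of the cycle `C_n` leaves a graph (induced on the remaining `n - 1` vertices)
that is `3`-colorable. -/
theorem colorable_three_square_cycleGraph_delete_vertex
    (n : ℕ) (hn : 4 ≤ n) (hmod : n % 3 = 1) (v : Fin n) :
    ((graphSquare (SimpleGraph.cycleGraph n)).induce ({v}ᶜ : Set (Fin n))).Colorable 3 := by
  have hn0 : 0 < n := by omega
  refine ⟨SimpleGraph.Coloring.mk
    (fun u => ⟨(u.1 - v).val % 3, Nat.mod_lt _ (by omega)⟩) ?_⟩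
  rintro ⟨a, ha⟩ ⟨b, hb⟩ hab
  simp only [SimpleGraph.comap_adj, Function.Embedding.coe_subtype, graphSquare] at hab
  obtain ⟨hne, hadj⟩ := hab
  simp only [ne_eq, Fin.ext_iff, Fin.mk.injEq]
  have hav : a ≠ v := ha
  have hbv : b ≠ v := hb
  have hav' : a.val ≠ v.val := fun h => hav (Fin.ext h)
  have hbv' : b.val ≠ v.val := fun h => hbv (Fin.ext h)
  have hAB : a.val ≠ b.val := fun h => hne (Fin.ext h)
  have key1 := fin_sub_val hn0 a v
  have key2 := fin_sub_val hn0 b v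
  have ha' := a.isLt
  have hb' := b.isLt
  have hv' := v.isLt
  rcases hadj with h | ⟨w, h1, h2⟩
  · rw [SimpleGraph.cycleGraph_adj'] at h
    have k1 := fin_sub_val hn0 a b
    have k2 := fin_sub_val hn0 b a
    omega
  · rw [SimpleGraph.cycleGraph_adj'] at h1 h2
    have hw' := w.isLt
    have k1 := fin_sub_val hn0 a w
    have k2 := fin_sub_val hn0 w a
    have k3 := fin_sub_val hn0 w b
    have k4 := fin_sub_val hn0 b w
    omega
end

section
/- Let G be a cubic (3-regular) graph whose vertex set is partitioned into a blue set B and a red set R such that the subgraph of G induced on B has maximum degree at most 1 (it is a matching plus isolated vertices) and every vertex of R has at least one neighbor in R. Then the subgraph of the square G² induced on B has maximum degree at most 3; that is, every blue vertex is adjacent in G² to at most 3 other blue vertices. -/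
/-- Let `G` be a cubic graph whose vertices are partitioned into a blue set `B`
and a red set `Bᶜ` such that the subgraph induced on `B` has maximum degree at
most 1 and every red vertex has at least one red neighbor. Then every blue
vertex has at most 3 blue neighbors in the square `G²`. -/
theorem blue_square_graph_maxDegree_le_three
    {V : Type*} [Fintype V] (G : SimpleGraph V) (B : Set V)
    (hcubic : ∀ v : V, {u | G.Adj v u}.ncard = 3)
    (hblue : ∀ v ∈ B, ({u ∈ B | G.Adj v u} : Set V).ncard ≤ 1)
    (hred : ∀ v ∉ B, ∃ u ∉ B, G.Adj v u) :
    ∀ v ∈ B, ({u ∈ B | (graphSquare G).Adj v u} : Set V).ncard ≤ 3 := by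
  classical
  intro v hv
  -- any common neighbor (of v and a blue u ≠ v) must be red
  have key : ∀ u ∈ B, u ≠ v → ∀ w, G.Adj v w → G.Adj w u → w ∉ B := by
    intro u hu hne w hvw hwu hwB
    have hsub : ({v, u} : Set V) ⊆ {x ∈ B | G.Adj w x} := by
      rintro x (rfl | rfl)
      · exact ⟨hv, hvw.symm⟩
      · exact ⟨hu, hwu⟩
    have h2 : ({v, u} : Set V).ncard = 2 := Set.ncard_pair (Ne.symm hne)
    have hle := Set.ncard_le_ncard hsub (Set.toFinite _)
    have := hblue w hwB
    omega
  set S := {u ∈ B | (graphSquare G).Adj v u} with hS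
  let f : V → V := fun u =>
    if G.Adj v u then u
    else if h : ∃ w, G.Adj v w ∧ G.Adj w u then h.choose else u
  have hmaps : ∀ u ∈ S, f u ∈ {w | G.Adj v w} := by
    intro u hu
    obtain ⟨huB, hne, hadj⟩ := hu
    by_cases hd : G.Adj v u
    · simpa [f, hd]
    · have hex : ∃ w, G.Adj v w ∧ G.Adj w u := hadj.resolve_left hd
      simp only [f, hd, if_false, dif_pos hex]
      exact hex.choose_spec.1
  have hinj : Set.InjOn f S := by
    intro u1 hu1 u2 hu2 hfe
    obtain ⟨hB1, hne1, hadj1⟩ := hu1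
    obtain ⟨hB2, hne2, hadj2⟩ := hu2
    by_cases hd1 : G.Adj v u1 <;> by_cases hd2 : G.Adj v u2
    · simpa [f, hd1, hd2] using hfe
    · have hex2 : ∃ w, G.Adj v w ∧ G.Adj w u2 := hadj2.resolve_left hd2
      have hfu : f u2 = hex2.choose := by simp [f, hd2, hex2]
      have hfu1 : f u1 = u1 := by simp [f, hd1]
      have hw := hex2.choose_spec
      have heq : hex2.choose = u1 := by rw [← hfu, ← hfe, hfu1]
      rw [heq] at hw
      exact absurd hB1 (key u2 hB2 (Ne.symm hne2) u1 hd1 hw.2)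
    · have hex1 : ∃ w, G.Adj v w ∧ G.Adj w u1 := hadj1.resolve_left hd1
      have hfu : f u1 = hex1.choose := by simp [f, hd1, hex1]
      have hfu2 : f u2 = u2 := by simp [f, hd2]
      have hw := hex1.choose_spec
      have heq : hex1.choose = u2 := by rw [← hfu, hfe, hfu2]
      rw [heq] at hw
      exact absurd hB2 (key u1 hB1 (Ne.symm hne1) u2 hd2 hw.2)
    · by_contra hne
      have hex1 : ∃ w, G.Adj v w ∧ G.Adj w u1 := hadj1.resolve_left hd1
      have hex2 : ∃ w, G.Adj v w ∧ G.Adj w u2 := hadj2.resolve_left hd2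
      have hf1 : f u1 = hex1.choose := by simp [f, hd1, hex1]
      have hf2 : f u2 = hex2.choose := by simp [f, hd2, hex2]
      set w := hex1.choose with hwdef
      have hw1 := hex1.choose_spec
      have heq : hex2.choose = w := by rw [← hf2, ← hfe, hf1]
      have hw2 := hex2.choose_spec
      rw [heq] at hw2
      have hwB : w ∉ B := key u1 hB1 (Ne.symm hne1) w hw1.1 hw1.2
      obtain ⟨r, hrB, hwr⟩ := hred w hwB
      have hvr : v ≠ r := fun h => hrB (h ▸ hv)
      have hru1 : r ≠ u1 := fun h => hrB (h ▸ hB1)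
      have hru2 : r ≠ u2 := fun h => hrB (h ▸ hB2)
      have hsub : ({v, r, u1, u2} : Set V) ⊆ {x | G.Adj w x} := by
        rintro x (rfl | rfl | rfl | rfl)
        · exact hw1.1.symm
        · exact hwr
        · exact hw1.2
        · exact hw2.2
      have hcard : ({v, r, u1, u2} : Set V).ncard = 4 := by
        rw [Set.ncard_insert_of_notMem (by
              simp only [Set.mem_insert_iff, Set.mem_singleton_iff]
              push_neg
              exact ⟨hvr, hne1, hne2⟩) (Set.toFinite _),
            Set.ncard_insert_of_notMem (by
              simp only [Set.mem_insert_iff, Set.mem_singleton_iff]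
              push_neg
              exact ⟨hru1, hru2⟩) (Set.toFinite _),
            Set.ncard_pair hne]
      have hsubN := Set.ncard_le_ncard hsub (Set.toFinite _)
      rw [hcard, hcubic w] at hsubN
      omega
  have hle := Set.ncard_le_ncard_of_injOn f hmaps hinj (Set.toFinite _)
  rw [hcubic v] at hle
  exact hle
end

section
/- Let G be a graph of maximum degree at most 3 and let v be a vertex of G of degree at most 2. Define G' as follows: if v has exactly two neighbors a and b and they are nonadjacent, let G' be G − v with the edge ab added; otherwise let G' = G − v. If the square (G')² is 7-colorable, then the square G² is 7-colorable. -/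
/-- Let `G` have maximum degree at most 3 and let `v` be a vertex of degree at
most 2. Let `G'` be the graph obtained from `G - v` by adding the edge `a b`
in case `v` has exactly two neighbors `a, b` and they are nonadjacent, and
`G' = G - v` otherwise. If `(G')²` is `7`-colorable then `G²` is `7`-colorable. -/
theorem colorable_square_of_delete_small_degree_vertex
    {V : Type*} [Fintype V] (G : SimpleGraph V)
    (hdeg : ∀ u : V, {w | G.Adj u w}.ncard ≤ 3)
    (v : V) (hv : {w | G.Adj v w}.ncard ≤ 2)
    (G' : SimpleGraph {u : V // u ≠ v})
    (hcase1 : ∀ (a b : V) (ha : a ≠ v) (hb : b ≠ v), a ≠ b →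
      {w | G.Adj v w} = {a, b} → ¬ G.Adj a b →
      ∀ u w : {x : V // x ≠ v}, G'.Adj u w ↔
        (G.Adj u.1 w.1 ∨ (u = ⟨a, ha⟩ ∧ w = ⟨b, hb⟩) ∨ (u = ⟨b, hb⟩ ∧ w = ⟨a, ha⟩)))
    (hcase2 : (¬ ∃ a b : V, a ≠ b ∧ {w | G.Adj v w} = {a, b} ∧ ¬ G.Adj a b) →
      ∀ u w : {x : V // x ≠ v}, G'.Adj u w ↔ G.Adj u.1 w.1)
    (h7 : (graphSquare G').Colorable 7) :
    (graphSquare G).Colorable 7 := by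
  classical
  obtain ⟨c⟩ := h7
  -- every edge of G between non-v vertices is an edge of G'
  have hedge : ∀ (a b : V) (ha : a ≠ v) (hb : b ≠ v), G.Adj a b →
      G'.Adj ⟨a, ha⟩ ⟨b, hb⟩ := by
    intro a b ha hb hab
    by_cases hc : ∃ a' b' : V, a' ≠ b' ∧ {w | G.Adj v w} = {a', b'} ∧ ¬ G.Adj a' b'
    · obtain ⟨a', b', hne, hNv, hnadj⟩ := hc
      have ha' : a' ≠ v := by
        have : G.Adj v a' := by
          have : a' ∈ ({a', b'} : Set V) := by simp
          rw [← hNv] at this; exact this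
        exact (G.ne_of_adj this).symm
      have hb' : b' ≠ v := by
        have : G.Adj v b' := by
          have : b' ∈ ({a', b'} : Set V) := by simp
          rw [← hNv] at this; exact this
        exact (G.ne_of_adj this).symm
      exact (hcase1 a' b' ha' hb' hne hNv hnadj _ _).mpr (Or.inl hab)
    · exact (hcase2 hc _ _).mpr hab
  -- adjacency in G² between non-v vertices transfers to G'²
  have key : ∀ (u w : V) (hu : u ≠ v) (hw : w ≠ v),
      (graphSquare G).Adj u w → (graphSquare G').Adj ⟨u, hu⟩ ⟨w, hw⟩ := by
    rintro u w hu hw ⟨huw, h⟩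
    have hne' : (⟨u, hu⟩ : {x : V // x ≠ v}) ≠ ⟨w, hw⟩ := by
      simp [Subtype.ext_iff]; exact huw
    rcases h with hadj | ⟨x, hux, hxw⟩
    · exact ⟨hne', Or.inl (hedge u w hu hw hadj)⟩
    · by_cases hx : x = v
      · rw [hx] at hux hxw
        by_cases hadj : G.Adj u w
        · exact ⟨hne', Or.inl (hedge u w hu hw hadj)⟩
        · have hsub : ({u, w} : Set V) ⊆ {w' | G.Adj v w'} := by
            rintro z (rfl | rfl)
            · exact hux.symm
            · exact hxw
          have hNv : {w' | G.Adj v w'} = {u, w} :=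
            (Set.eq_of_subset_of_ncard_le hsub
              (by rw [Set.ncard_pair huw]; exact hv) (Set.toFinite _)).symm
          exact ⟨hne', Or.inl ((hcase1 u w hu hw huw hNv hadj _ _).mpr
            (Or.inr (Or.inl ⟨rfl, rfl⟩)))⟩
      · exact ⟨hne', Or.inr ⟨⟨x, hx⟩, hedge u x hu hx hux, hedge x w hx hw hxw⟩⟩
  -- the set of vertices at distance ≤ 2 from v has at most 6 elements
  set S : Set V := {w | (graphSquare G).Adj v w} with hS
  have hTball : ∀ x : V, G.Adj v x →
      (insert x ({y | G.Adj x y} \ {v})).ncard ≤ 3 := by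
    intro x hvx
    have hmem : v ∈ {y | G.Adj x y} := hvx.symm
    have h1 : ({y | G.Adj x y} \ {v}).ncard + 1 = {y | G.Adj x y}.ncard :=
      Set.ncard_diff_singleton_add_one hmem
    have h2 := hdeg x
    have h3 := Set.ncard_insert_le x ({y | G.Adj x y} \ {v})
    omega
  have hScard : S.ncard ≤ 6 := by
    have hN := hv
    -- case on the structure of the neighborhood of v
    interval_cases hn : ({w | G.Adj v w}.ncard)
    · -- no neighbors: S is empty
      have hNe : {w | G.Adj v w} = ∅ := (Set.ncard_eq_zero (Set.toFinite _)).mp hn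
      have : S = ∅ := by
        ext w
        simp only [hS, Set.mem_setOf_eq, Set.mem_empty_iff_false, iff_false]
        rintro ⟨-, hvw | ⟨x, hvx, -⟩⟩
        · exact absurd hvw (by have := Set.eq_empty_iff_forall_notMem.mp hNe w; exact this)
        · exact absurd hvx (by have := Set.eq_empty_iff_forall_notMem.mp hNe x; exact this)
      simp [this]
    · obtain ⟨a, hNa⟩ := Set.ncard_eq_one.mp hn
      have hsub : S ⊆ insert a ({y | G.Adj a y} \ {v}) := by
        rintro w ⟨hwv, hvw | ⟨x, hvx, hxw⟩⟩
        · have : w ∈ {w' | G.Adj v w'} := hvw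
          rw [hNa] at this
          exact Or.inl this
        · have : x ∈ {w' | G.Adj v w'} := hvx
          rw [hNa] at this
          rcases this with rfl
          exact Or.inr ⟨hxw, fun h => (Ne.symm hwv) h⟩
      have hadj_a : G.Adj v a := by
        have : a ∈ ({a} : Set V) := rfl
        rw [← hNa] at this; exact this
      calc S.ncard ≤ (insert a ({y | G.Adj a y} \ {v})).ncard :=
            Set.ncard_le_ncard hsub (Set.toFinite _)
        _ ≤ 3 := hTball a hadj_a
        _ ≤ 6 := by omega
    · obtain ⟨a, b, hab, hNab⟩ := Set.ncard_eq_two.mp hn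
      have hadj_a : G.Adj v a := by
        have : a ∈ ({a, b} : Set V) := by simp
        rw [← hNab] at this; exact this
      have hadj_b : G.Adj v b := by
        have : b ∈ ({a, b} : Set V) := by simp
        rw [← hNab] at this; exact this
      have hsub : S ⊆ (insert a ({y | G.Adj a y} \ {v})) ∪
          (insert b ({y | G.Adj b y} \ {v})) := by
        rintro w ⟨hwv, hvw | ⟨x, hvx, hxw⟩⟩
        · have : w ∈ {w' | G.Adj v w'} := hvw
          rw [hNab] at this
          rcases this with rfl | rfl
          · exact Or.inl (Or.inl rfl)
          · exact Or.inr (Or.inl rfl)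
        · have : x ∈ {w' | G.Adj v w'} := hvx
          rw [hNab] at this
          rcases this with rfl | rfl
          · exact Or.inl (Or.inr ⟨hxw, fun h => (Ne.symm hwv) h⟩)
          · exact Or.inr (Or.inr ⟨hxw, fun h => (Ne.symm hwv) h⟩)
      calc S.ncard ≤ ((insert a ({y | G.Adj a y} \ {v})) ∪
              (insert b ({y | G.Adj b y} \ {v}))).ncard :=
            Set.ncard_le_ncard hsub (Set.toFinite _)
        _ ≤ (insert a ({y | G.Adj a y} \ {v})).ncard
              + (insert b ({y | G.Adj b y} \ {v})).ncard := Set.ncard_union_le _ _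
        _ ≤ 6 := by
            have := hTball a hadj_a
            have := hTball b hadj_b
            omega
  -- find a free color for v
  set f : V → Fin 7 := fun w => if h : w = v then 0 else c ⟨w, h⟩ with hf
  have hfree : ∃ k : Fin 7, k ∉ f '' S := by
    by_contra hc
    push_neg at hc
    have h1 : (Set.univ : Set (Fin 7)) ⊆ f '' S := fun k _ => hc k
    have h2 := Set.ncard_le_ncard h1 (Set.toFinite _)
    have h3 : (f '' S).ncard ≤ S.ncard := Set.ncard_image_le (Set.toFinite S)
    simp [Set.ncard_univ] at h2
    omega
  obtain ⟨k, hk⟩ := hfree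
  refine ⟨SimpleGraph.Coloring.mk (fun u => if h : u = v then k else c ⟨u, h⟩) ?_⟩
  intro u w hadj
  by_cases hu : u = v <;> by_cases hw : w = v
  · exact absurd (hu.trans hw.symm) hadj.1
  · rw [hu] at hadj
    simp only [dif_pos hu, dif_neg hw]
    intro heq
    apply hk
    exact ⟨w, hadj, by simp [hf, dif_neg hw, heq.symm]⟩
  · rw [hw] at hadj
    simp only [dif_pos hw, dif_neg hu]
    intro heq
    apply hk
    exact ⟨u, hadj.symm, by simp [hf, dif_neg hu, heq]⟩
  · simp only [dif_neg hu, dif_neg hw]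
    exact c.valid (key u w hu hw hadj)
end

section
/- Let G be a graph of maximum degree at most 3 and let e = xy be a cut-edge (bridge) of G such that G − e has exactly two connected components, G₁ containing x and G₂ containing y. If the squares G₁² and G₂² are both 7-colorable, then the square G² is 7-colorable. -/
/-- Let `G` have maximum degree at most 3 and let `xy` be a cut-edge such that
`G - xy` has exactly two connected components, `G₁` containing `x` and `G₂`
containing `y`. If `G₁²` and `G₂²` are both `7`-colorable, then `G²` is
`7`-colorable. -/
theorem colorable_square_of_bridge
    {V : Type*} [Fintype V] (G : SimpleGraph V)
    (hdeg : ∀ u : V, {w | G.Adj u w}.ncard ≤ 3)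
    (x y : V) (hxy : G.Adj x y)
    (G' : SimpleGraph V) (hG' : G' = G.deleteEdges {s(x, y)})
    (hsep : ¬ G'.Reachable x y)
    (hall : ∀ u : V, G'.Reachable u x ∨ G'.Reachable u y)
    (h1 : (graphSquare (G'.induce {u | G'.Reachable u x})).Colorable 7)
    (h2 : (graphSquare (G'.induce {u | G'.Reachable u y})).Colorable 7) :
    (graphSquare G).Colorable 7 := by
  classical
  set A : Set V := {u | G'.Reachable u x} with hAdef
  set B : Set V := {u | G'.Reachable u y} with hBdef
  obtain ⟨C₁⟩ := h1
  obtain ⟨C₂⟩ := h2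
  have hxA : x ∈ A := SimpleGraph.Reachable.refl x
  have hyB : y ∈ B := SimpleGraph.Reachable.refl y
  have hdisj : ∀ u, u ∈ A → u ∈ B → False := fun u ha hb =>
    hsep ((SimpleGraph.Reachable.symm ha).trans hb)
  have hyA : y ∉ A := fun h => hdisj y h hyB
  have hxB : x ∉ B := fun h => hdisj x hxA h
  have hmemB : ∀ u, u ∉ A → u ∈ B := fun u hu => (hall u).resolve_left hu
  have hG'iff : ∀ u v, G'.Adj u v ↔ G.Adj u v ∧ ¬(u = x ∧ v = y) ∧ ¬(u = y ∧ v = x) := by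
    intro u v
    simp [hG', Sym2.eq_iff, not_or]
  have hG'sub : ∀ {u v}, G'.Adj u v → G.Adj u v := fun h => ((hG'iff _ _).1 h).1
  have hAcl : ∀ {u v}, u ∈ A → G'.Adj u v → v ∈ A := fun hu h => (h.symm.reachable).trans hu
  have hcross : ∀ {u v}, u ∈ A → v ∈ B → G.Adj u v → u = x ∧ v = y := by
    intro u v hu hv h
    by_contra hc
    have h2 : ¬(u = y ∧ v = x) := fun hp => hyA (hp.1 ▸ hu)
    have : G'.Adj u v := (hG'iff u v).2 ⟨h, hc, h2⟩
    exact hdisj v (hAcl hu this) hv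
  have hinA : ∀ {u v}, u ∈ A → v ∈ A → G.Adj u v → G'.Adj u v := by
    intro u v hu hv h
    exact (hG'iff u v).2 ⟨h, fun hp => hyA (hp.2 ▸ hv), fun hp => hyA (hp.1 ▸ hu)⟩
  have hinB : ∀ {u v}, u ∈ B → v ∈ B → G.Adj u v → G'.Adj u v := by
    intro u v hu hv h
    exact (hG'iff u v).2 ⟨h, fun hp => hxB (hp.1 ▸ hu), fun hp => hxB (hp.2 ▸ hv)⟩
  set t : Fin 7 := C₁ ⟨x, hxA⟩ with htdef
  set b : Fin 7 := C₂ ⟨y, hyB⟩ with hbdef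
  have ht' : ∀ (h : x ∈ A), C₁ ⟨x, h⟩ = t := fun _ => rfl
  have hb' : ∀ (h : y ∈ B), C₂ ⟨y, h⟩ = b := fun _ => rfl
  set S : Set (Fin 7) := insert t (⇑C₁ '' {u : A | G.Adj ↑u x}) with hSdef
  set D : Set (Fin 7) := ⇑C₂ '' {v : B | G'.Adj y ↑v} with hDdef
  have htS : t ∈ S := Set.mem_insert _ _
  have hNA : ({u : A | G.Adj ↑u x}).ncard ≤ 2 := by
    have himg : (Subtype.val '' {u : A | G.Adj ↑u x}) ⊆ {w | G.Adj x w} \ {y} := by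
      rintro w ⟨⟨u, hu⟩, hadj, rfl⟩
      exact ⟨hadj.symm, fun h => hyA (h ▸ hu)⟩
    have e1 : ({u : A | G.Adj ↑u x}).ncard = (Subtype.val '' {u : A | G.Adj ↑u x}).ncard :=
      (Set.ncard_image_of_injective _ Subtype.val_injective).symm
    have e2 : (Subtype.val '' {u : A | G.Adj ↑u x}).ncard ≤ ({w | G.Adj x w} \ {y}).ncard :=
      Set.ncard_le_ncard himg (Set.toFinite _)
    have e3 : ({w | G.Adj x w} \ {y}).ncard < ({w | G.Adj x w}).ncard :=
      Set.ncard_diff_singleton_lt_of_mem hxy (Set.toFinite _)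
    have := hdeg x
    omega
  have hND : ({v : B | G'.Adj y ↑v}).ncard ≤ 2 := by
    have himg : (Subtype.val '' {v : B | G'.Adj y ↑v}) ⊆ {w | G.Adj y w} \ {x} := by
      rintro w ⟨⟨v, hv⟩, hadj, rfl⟩
      exact ⟨hG'sub hadj, fun h => hxB (h ▸ hv)⟩
    have e1 : ({v : B | G'.Adj y ↑v}).ncard = (Subtype.val '' {v : B | G'.Adj y ↑v}).ncard :=
      (Set.ncard_image_of_injective _ Subtype.val_injective).symm
    have e2 : (Subtype.val '' {v : B | G'.Adj y ↑v}).ncard ≤ ({w | G.Adj y w} \ {x}).ncard :=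
      Set.ncard_le_ncard himg (Set.toFinite _)
    have e3 : ({w | G.Adj y w} \ {x}).ncard < ({w | G.Adj y w}).ncard :=
      Set.ncard_diff_singleton_lt_of_mem hxy.symm (Set.toFinite _)
    have := hdeg y
    omega
  have hS3 : S.ncard ≤ 3 := by
    have e1 : S.ncard ≤ (⇑C₁ '' {u : A | G.Adj ↑u x}).ncard + 1 := Set.ncard_insert_le _ _
    have e2 : (⇑C₁ '' {u : A | G.Adj ↑u x}).ncard ≤ ({u : A | G.Adj ↑u x}).ncard :=
      Set.ncard_image_le (Set.toFinite _)
    omega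
  have hD2 : D.ncard ≤ 2 := by
    have e2 : D.ncard ≤ ({v : B | G'.Adj y ↑v}).ncard := Set.ncard_image_le (Set.toFinite _)
    omega
  have hexists : ∀ (T : Set (Fin 7)), T.ncard ≤ 6 → ∃ e, e ∉ T := by
    intro T hT
    by_contra h'
    push_neg at h'
    have hTu : T = Set.univ := Set.eq_univ_of_forall h'
    rw [hTu, Set.ncard_univ] at hT
    simp [Nat.card_eq_fintype_card] at hT
  obtain ⟨e, he⟩ : ∃ e, e ∉ S ∪ D ∪ {b} := by
    apply hexists
    have u1 := Set.ncard_union_le (S ∪ D) {b}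
    have u2 := Set.ncard_union_le S D
    have u3 : ({b} : Set (Fin 7)).ncard = 1 := Set.ncard_singleton b
    omega
  obtain ⟨f, hf⟩ : ∃ f, f ∉ S ∪ D ∪ {e} := by
    apply hexists
    have u1 := Set.ncard_union_le (S ∪ D) {e}
    have u2 := Set.ncard_union_le S D
    have u3 : ({e} : Set (Fin 7)).ncard = 1 := Set.ncard_singleton e
    omega
  have heS : e ∉ S := fun h => he (Or.inl (Or.inl h))
  have heD : e ∉ D := fun h => he (Or.inl (Or.inr h))
  have heb : e ≠ b := fun h => he (Or.inr h)
  have hfS : f ∉ S := fun h => hf (Or.inl (Or.inl h))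
  have hfD : f ∉ D := fun h => hf (Or.inl (Or.inr h))
  have hfe : f ≠ e := fun h => hf (Or.inr h)
  have hte : t ≠ e := fun h => heS (h ▸ htS)
  have htf : t ≠ f := fun h => hfS (h ▸ htS)
  set σ : Fin 7 → Fin 7 := (Equiv.swap t f) ∘ (Equiv.swap b e) with hσdef
  have hσinj : Function.Injective σ :=
    ((Equiv.swap t f).injective).comp (Equiv.swap b e).injective
  have hσb : σ b = e := by
    simp only [hσdef, Function.comp_apply, Equiv.swap_apply_left]
    exact Equiv.swap_apply_of_ne_of_ne (Ne.symm hte) hfe.symm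
  have hbD : b ∉ D := by
    rintro ⟨⟨v, hv⟩, hadj, hcv⟩
    have hne : (⟨y, hyB⟩ : B) ≠ ⟨v, hv⟩ := by
      intro h
      have : y = v := congrArg Subtype.val h
      exact G'.loopless.irrefl y (this ▸ hadj)
    have hA2 : (graphSquare (G'.induce B)).Adj ⟨y, hyB⟩ ⟨v, hv⟩ := ⟨hne, Or.inl hadj⟩
    rw [hbdef] at hcv
    exact C₂.valid hA2 hcv.symm
  have hσD : ∀ d ∈ D, σ d ≠ t := by
    intro d hd
    have hdb : d ≠ b := fun h => hbD (h ▸ hd)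
    have hde : d ≠ e := fun h => heD (h ▸ hd)
    have hdf : d ≠ f := fun h => hfD (h ▸ hd)
    simp only [hσdef, Function.comp_apply, Equiv.swap_apply_of_ne_of_ne hdb hde]
    by_cases hdt : d = t
    · subst hdt
      rw [Equiv.swap_apply_left]
      exact Ne.symm htf
    · rw [Equiv.swap_apply_of_ne_of_ne hdt hdf]
      exact hdt
  set c : V → Fin 7 := fun u =>
    if h : u ∈ A then C₁ ⟨u, h⟩ else σ (C₂ ⟨u, hmemB u h⟩) with hcdef
  have hcA : ∀ u (hu : u ∈ A), c u = C₁ ⟨u, hu⟩ := by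
    intro u hu; simp only [hcdef, dif_pos hu]
  have hcB : ∀ u (hu : u ∈ B), c u = σ (C₂ ⟨u, hu⟩) := by
    intro u hu
    have h' : u ∉ A := fun h => hdisj u h hu
    simp only [hcdef, dif_neg h']
  -- validity inside A
  have hvalA : ∀ u v (hu : u ∈ A) (hv : v ∈ A), (graphSquare G).Adj u v → c u ≠ c v := by
    intro u v hu hv h
    obtain ⟨hne, hadj⟩ : u ≠ v ∧ (G.Adj u v ∨ ∃ w, G.Adj u w ∧ G.Adj w v) := h
    rw [hcA u hu, hcA v hv]
    have hsub : (⟨u, hu⟩ : A) ≠ ⟨v, hv⟩ := fun h => hne (congrArg Subtype.val h)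
    apply C₁.valid
    refine ⟨hsub, ?_⟩
    rcases hadj with h' | ⟨w, h1', h2'⟩
    · exact Or.inl (hinA hu hv h')
    · by_cases hw : w ∈ A
      · exact Or.inr ⟨⟨w, hw⟩, hinA hu hw h1', hinA hw hv h2'⟩
      · have hwB := hmemB w hw
        have p1 := hcross hu hwB h1'
        have p2 := hcross hv hwB h2'.symm
        exact absurd (p1.1.trans p2.1.symm) hne
  -- validity inside B
  have hvalB : ∀ u v (hu : u ∈ B) (hv : v ∈ B), (graphSquare G).Adj u v → c u ≠ c v := by
    intro u v hu hv h
    obtain ⟨hne, hadj⟩ : u ≠ v ∧ (G.Adj u v ∨ ∃ w, G.Adj u w ∧ G.Adj w v) := h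
    rw [hcB u hu, hcB v hv]
    intro hEq
    have hEq2 := hσinj hEq
    have hsub : (⟨u, hu⟩ : B) ≠ ⟨v, hv⟩ := fun h => hne (congrArg Subtype.val h)
    apply C₂.valid ?_ hEq2
    refine ⟨hsub, ?_⟩
    rcases hadj with h' | ⟨w, h1', h2'⟩
    · exact Or.inl (hinB hu hv h')
    · by_cases hw : w ∈ B
      · exact Or.inr ⟨⟨w, hw⟩, hinB hu hw h1', hinB hw hv h2'⟩
      · have hwA : w ∈ A := (hall w).resolve_right hw
        have p1 := hcross hwA hu h1'.symm
        have p2 := hcross hwA hv h2'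
        exact absurd (p1.2.trans p2.2.symm) hne
  -- validity across the bridge
  have hvalAB : ∀ u v (hu : u ∈ A) (hv : v ∈ B), (graphSquare G).Adj u v → c u ≠ c v := by
    intro u v hu hv h
    obtain ⟨hne, hadj⟩ : u ≠ v ∧ (G.Adj u v ∨ ∃ w, G.Adj u w ∧ G.Adj w v) := h
    rcases hadj with h' | ⟨w, h1', h2'⟩
    · obtain ⟨hux, hvy⟩ := hcross hu hv h'
      subst hux; subst hvy
      rw [hcA u hu, hcB v hv, ht' hu, hb' hv, hσb]
      exact hte
    · by_cases hw : w ∈ A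
      · -- w = x, v = y and u is a neighbor of x in A
        obtain ⟨hwx, hvy⟩ := hcross hw hv h2'
        subst hwx; subst hvy
        rw [hcA u hu, hcB v hv, hb' hv, hσb]
        have hS_u : C₁ ⟨u, hu⟩ ∈ S :=
          Set.mem_insert_of_mem _ ⟨⟨u, hu⟩, h1', rfl⟩
        exact fun hh => heS (hh ▸ hS_u)
      · have hwB := hmemB w hw
        obtain ⟨hux, hwy⟩ := hcross hu hwB h1'
        subst hux; subst hwy
        -- u = x, w = y, v is a G'-neighbor of y in B
        have hG'yv : G'.Adj w v := hinB hwB hv h2'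
        have hdD : C₂ ⟨v, hv⟩ ∈ D := ⟨⟨v, hv⟩, hG'yv, rfl⟩
        rw [hcA u hu, hcB v hv, ht' hu]
        exact (hσD _ hdD).symm
  refine ⟨SimpleGraph.Coloring.mk c ?_⟩
  intro u v hadj
  by_cases hu : u ∈ A <;> by_cases hv : v ∈ A
  · exact hvalA u v hu hv hadj
  · exact hvalAB u v hu (hmemB v hv) hadj
  · exact (hvalAB v u hv (hmemB u hu) hadj.symm).symm
  · exact hvalB u v (hmemB u hu) (hmemB v hv) hadj
end

section
/- Let G be a cubic graph containing two edges x₁x₂ and y₁y₂ (with x₁, x₂, y₁, y₂ distinct) such that G − x₁x₂ − y₁y₂ has exactly two connected components: G₁ containing x₁ and y₁, and G₂ containing x₂ and y₂. Assume x₁y₁ is not an edge of G, but x₂y₂ is an edge of G; let x₃ and y₃ be the third neighbors of x₂ and y₂ respectively (so x₃, y₃ ∈ V(G₂)), and assume x₃ ≠ y₃ and x₃y₃ is not an edge of G. If the squares (G₁ + x₁y₁)² and (G₂ − x₂ − y₂ + x₃y₃)² are both 7-colorable, then G² is 7-colorable. -/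
/-- The graph `H + ab` obtained from `H` by adding the edge `a b`. -/
def addEdge {α : Type*} (H : SimpleGraph α) (a b : α) : SimpleGraph α :=
  H ⊔ SimpleGraph.fromEdgeSet {s(a, b)}

lemma addEdge_adj {α : Type*} (H : SimpleGraph α) (a b u v : α) :
    (addEdge H a b).Adj u v ↔ H.Adj u v ∨ (s(u, v) = s(a, b) ∧ u ≠ v) := by
  simp [addEdge, SimpleGraph.fromEdgeSet_adj]

/-- Any injection defined on finitely many points extends to a permutation. -/
lemma exists_perm_extend {n m : ℕ} (s t : Fin n → Fin m)
    (hs : Function.Injective s) (ht : Function.Injective t) :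
    ∃ σ : Equiv.Perm (Fin m), ∀ i, σ (s i) = t i := by
  classical
  let e : {x // x ∈ Set.range s} ≃ {x // x ∈ Set.range t} :=
    (Equiv.ofInjective s hs).symm.trans (Equiv.ofInjective t ht)
  refine ⟨e.extendSubtype, fun i => ?_⟩
  rw [Equiv.extendSubtype_apply_of_mem e (s i) ⟨i, rfl⟩]
  have h1 : (Equiv.ofInjective s hs).symm ⟨s i, ⟨i, rfl⟩⟩ = i := by
    rw [Equiv.symm_apply_eq]; rfl
  show ((Equiv.ofInjective t ht) ((Equiv.ofInjective s hs).symm ⟨s i, ⟨i, rfl⟩⟩) : Fin m) = t i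
  rw [h1]; rfl

/-- A permutation of `Fin m` with four prescribed values. -/
lemma exists_perm_four {m : ℕ} (s₁ s₂ s₃ s₄ t₁ t₂ t₃ t₄ : Fin m)
    (h12 : s₁ ≠ s₂) (h13 : s₁ ≠ s₃) (h14 : s₁ ≠ s₄)
    (h23 : s₂ ≠ s₃) (h24 : s₂ ≠ s₄) (h34 : s₃ ≠ s₄)
    (g12 : t₁ ≠ t₂) (g13 : t₁ ≠ t₃) (g14 : t₁ ≠ t₄)
    (g23 : t₂ ≠ t₃) (g24 : t₂ ≠ t₄) (g34 : t₃ ≠ t₄) :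
    ∃ σ : Equiv.Perm (Fin m), σ s₁ = t₁ ∧ σ s₂ = t₂ ∧ σ s₃ = t₃ ∧ σ s₄ = t₄ := by
  have hs : Function.Injective ![s₁, s₂, s₃, s₄] := by
    intro i j hij
    fin_cases i <;> fin_cases j <;> simp_all
  have ht : Function.Injective ![t₁, t₂, t₃, t₄] := by
    intro i j hij
    fin_cases i <;> fin_cases j <;> simp_all
  obtain ⟨σ, hσ⟩ := exists_perm_extend _ _ hs ht
  exact ⟨σ, by simpa using hσ 0, by simpa using hσ 1, by simpa using hσ 2, by simpa using hσ 3⟩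

/-- In `Fin 7`, any finset of at most 6 elements misses some color. -/
lemma exists_notmem_of_card_le {t : Finset (Fin 7)} (ht : t.card ≤ 6) : ∃ c, c ∉ t := by
  by_contra hc
  push_neg at hc
  have h7 : (Finset.univ : Finset (Fin 7)).card ≤ t.card :=
    Finset.card_le_card (fun x _ => hc x)
  simp only [Finset.card_univ, Fintype.card_fin] at h7
  omega

/-- Let `G` be a cubic graph with two edges `x₁x₂`, `y₁y₂` whose deletion
leaves exactly two components `G₁ ∋ x₁, y₁` and `G₂ ∋ x₂, y₂`, where `x₁y₁` is
not an edge of `G` but `x₂y₂` is; let `x₃`, `y₃` be the third neighbors of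
`x₂`, `y₂` respectively (they lie in `G₂`), with `x₃ ≠ y₃` and `x₃y₃` not an
edge of `G`. If `(G₁ + x₁y₁)²` and `(G₂ - x₂ - y₂ + x₃y₃)²` are both
`7`-colorable, then `G²` is `7`-colorable. -/
theorem colorable_square_of_two_edge_cut'
    {V : Type*} [Fintype V] (G : SimpleGraph V)
    (hcubic : ∀ u : V, {w | G.Adj u w}.ncard = 3)
    (x₁ x₂ y₁ y₂ x₃ y₃ : V)
    (hdistinct : ([x₁, x₂, y₁, y₂] : List V).Pairwise (· ≠ ·))
    (hx : G.Adj x₁ x₂) (hy : G.Adj y₁ y₂)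
    (hx1y1 : ¬ G.Adj x₁ y₁) (hx2y2 : G.Adj x₂ y₂)
    (hx3adj : G.Adj x₂ x₃) (hx3ne1 : x₃ ≠ x₁) (hx3ney2 : x₃ ≠ y₂)
    (hy3adj : G.Adj y₂ y₃) (hy3ne1 : y₃ ≠ y₁) (hy3nex2 : y₃ ≠ x₂)
    (hx3y3 : x₃ ≠ y₃) (hx3y3adj : ¬ G.Adj x₃ y₃)
    (G' : SimpleGraph V) (hG' : G' = G.deleteEdges {s(x₁, x₂), s(y₁, y₂)})
    (hsep : ¬ G'.Reachable x₁ x₂)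
    (hall : ∀ u : V, G'.Reachable u x₁ ∨ G'.Reachable u x₂)
    (hy1 : G'.Reachable y₁ x₁) (hy2 : G'.Reachable y₂ x₂)
    (hx3r : G'.Reachable x₃ x₂) (hy3r : G'.Reachable y₃ x₂)
    (h1 : (graphSquare (addEdge (G'.induce {u | G'.Reachable u x₁})
        ⟨x₁, SimpleGraph.Reachable.refl x₁⟩ ⟨y₁, hy1⟩)).Colorable 7)
    (h2 : (graphSquare (addEdge
        (G'.induce {u | G'.Reachable u x₂ ∧ u ≠ x₂ ∧ u ≠ y₂})
        ⟨x₃, ⟨hx3r, hx3adj.ne', hx3ney2⟩⟩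
        ⟨y₃, ⟨hy3r, hy3nex2, hy3adj.ne'⟩⟩)).Colorable 7) :
    (graphSquare G).Colorable 7 := by
  classical
  -- distinctness of the four cut vertices
  simp only [List.pairwise_cons, List.mem_cons, List.mem_singleton, List.not_mem_nil,
    List.Pairwise.nil, and_true] at hdistinct
  obtain ⟨hA, hB, hC, -⟩ := hdistinct
  have hd12 : x₁ ≠ x₂ := hA x₂ (by simp)
  have hd13 : x₁ ≠ y₁ := hA y₁ (by simp)
  have hd14 : x₁ ≠ y₂ := hA y₂ (by simp)
  have hd23 : x₂ ≠ y₁ := hB y₁ (by simp)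
  have hd24 : x₂ ≠ y₂ := hB y₂ (by simp)
  have hd34 : y₁ ≠ y₂ := hC y₂ (by simp)
  clear hA hB hC
  -- basic separation facts
  have hdisj : ∀ u : V, G'.Reachable u x₂ → ¬ G'.Reachable u x₁ := by
    intro u h2' h1'
    exact hsep (h1'.symm.trans h2')
  have hnotL2 : ¬ G'.Reachable x₂ x₁ := hdisj x₂ (SimpleGraph.Reachable.refl x₂)
  have hnotLy2 : ¬ G'.Reachable y₂ x₁ := hdisj y₂ hy2
  have hnotRy1 : ¬ G'.Reachable y₁ x₂ := fun h => hdisj y₁ h hy1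
  have hnotRx1 : ¬ G'.Reachable x₁ x₂ := hsep
  -- G' adjacency description
  have hG'adj : ∀ u v : V, G'.Adj u v ↔
      G.Adj u v ∧ s(u, v) ≠ s(x₁, x₂) ∧ s(u, v) ≠ s(y₁, y₂) := by
    subst hG'
    intro u v
    rw [SimpleGraph.deleteEdges_adj]
    simp only [Set.mem_insert_iff, Set.mem_singleton_iff]
    tauto
  -- cross edges
  have hcross : ∀ u w : V, G.Adj u w → G'.Reachable u x₁ → ¬ G'.Reachable w x₁ →
      (u = x₁ ∧ w = x₂) ∨ (u = y₁ ∧ w = y₂) := by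
    intro u w hadj hu hw
    by_cases h1' : s(u, w) = s(x₁, x₂)
    · rcases Sym2.eq_iff.mp h1' with ⟨rfl, rfl⟩ | ⟨rfl, rfl⟩
      · exact Or.inl ⟨rfl, rfl⟩
      · exact absurd hu hnotL2
    by_cases h2' : s(u, w) = s(y₁, y₂)
    · rcases Sym2.eq_iff.mp h2' with ⟨rfl, rfl⟩ | ⟨rfl, rfl⟩
      · exact Or.inr ⟨rfl, rfl⟩
      · exact absurd hu hnotLy2
    · have : G'.Adj u w := (hG'adj u w).mpr ⟨hadj, h1', h2'⟩
      exact absurd (this.symm.reachable.trans hu) hw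
  -- edges inside the left part stay in G'
  have hGtoG'L : ∀ u v : V, G.Adj u v → G'.Reachable u x₁ → G'.Reachable v x₁ →
      G'.Adj u v := by
    intro u v hadj hu hv
    rw [hG'adj]
    refine ⟨hadj, fun hc => ?_, fun hc => ?_⟩
    · rcases Sym2.eq_iff.mp hc with ⟨rfl, rfl⟩ | ⟨rfl, rfl⟩
      · exact hnotL2 hv
      · exact hnotL2 hu
    · rcases Sym2.eq_iff.mp hc with ⟨rfl, rfl⟩ | ⟨rfl, rfl⟩
      · exact hnotLy2 hv
      · exact hnotLy2 hu
  -- edges inside the right part stay in G'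
  have hGtoG'R : ∀ u v : V, G.Adj u v → G'.Reachable u x₂ → G'.Reachable v x₂ →
      G'.Adj u v := by
    intro u v hadj hu hv
    rw [hG'adj]
    refine ⟨hadj, fun hc => ?_, fun hc => ?_⟩
    · rcases Sym2.eq_iff.mp hc with ⟨rfl, rfl⟩ | ⟨rfl, rfl⟩
      · exact hnotRx1 hu
      · exact hnotRx1 hv
    · rcases Sym2.eq_iff.mp hc with ⟨rfl, rfl⟩ | ⟨rfl, rfl⟩
      · exact hnotRy1 hu
      · exact hnotRy1 hv
  -- neighbor sets
  have htriple : ∀ u a b c : V, G.Adj u a → G.Adj u b → G.Adj u c →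
      a ≠ b → a ≠ c → b ≠ c → {w | G.Adj u w} = {a, b, c} := by
    intro u a b c ha hb hc hab hac hbc
    symm
    apply Set.eq_of_subset_of_ncard_le
    · intro w hw
      simp only [Set.mem_insert_iff, Set.mem_singleton_iff] at hw
      rcases hw with rfl | rfl | rfl <;> assumption
    · rw [hcubic u]
      have : ({a, b, c} : Set V).ncard = 3 :=
        Set.ncard_eq_three.mpr ⟨a, b, c, hab, hac, hbc, rfl⟩
      omega
    · exact Set.toFinite _
  have hthird : ∀ u v : V, G.Adj u v → ∃ a b : V, a ≠ b ∧ v ≠ a ∧ v ≠ b ∧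
      {w | G.Adj u w} = {v, a, b} := by
    intro u v huv
    obtain ⟨a, b, c, hab, hac, hbc, hset⟩ := Set.ncard_eq_three.mp (hcubic u)
    have hv : v ∈ ({a, b, c} : Set V) := hset ▸ huv
    simp only [Set.mem_insert_iff, Set.mem_singleton_iff] at hv
    rcases hv with rfl | rfl | rfl
    · exact ⟨b, c, hbc, hab, hac, hset⟩
    · refine ⟨a, c, hac, hab.symm, hbc, ?_⟩
      rw [hset]; ext w; simp only [Set.mem_insert_iff, Set.mem_singleton_iff]; tauto
    · refine ⟨a, b, hab, hac.symm, hbc.symm, ?_⟩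
      rw [hset]; ext w; simp only [Set.mem_insert_iff, Set.mem_singleton_iff]; tauto
  have hNx2 : {w | G.Adj x₂ w} = {x₁, y₂, x₃} :=
    htriple x₂ x₁ y₂ x₃ hx.symm hx2y2 hx3adj hd14 (Ne.symm hx3ne1) (Ne.symm hx3ney2)
  have hNy2 : {w | G.Adj y₂ w} = {y₁, x₂, y₃} :=
    htriple y₂ y₁ x₂ y₃ hy.symm hx2y2.symm hy3adj (Ne.symm hd23) (Ne.symm hy3ne1)
      (Ne.symm hy3nex2)
  obtain ⟨a₁, a₂, ha12, hxa1, hxa2, hNx1⟩ := hthird x₁ x₂ hx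
  obtain ⟨b₁, b₂, hb12, hyb1, hyb2, hNy1⟩ := hthird y₁ y₂ hy
  obtain ⟨p, q, hpq, hxp, hxq, hNx3⟩ := hthird x₃ x₂ hx3adj.symm
  obtain ⟨r, s, hrs, hyr, hys, hNy3⟩ := hthird y₃ y₂ hy3adj.symm
  -- adjacency facts from neighbor sets
  have hadj_x1a1 : G.Adj x₁ a₁ := by
    have : a₁ ∈ {w | G.Adj x₁ w} := by rw [hNx1]; simp
    exact this
  have hadj_x1a2 : G.Adj x₁ a₂ := by
    have : a₂ ∈ {w | G.Adj x₁ w} := by rw [hNx1]; simp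
    exact this
  have hadj_y1b1 : G.Adj y₁ b₁ := by
    have : b₁ ∈ {w | G.Adj y₁ w} := by rw [hNy1]; simp
    exact this
  have hadj_y1b2 : G.Adj y₁ b₂ := by
    have : b₂ ∈ {w | G.Adj y₁ w} := by rw [hNy1]; simp
    exact this
  have hadj_x3p : G.Adj x₃ p := by
    have : p ∈ {w | G.Adj x₃ w} := by rw [hNx3]; simp
    exact this
  have hadj_x3q : G.Adj x₃ q := by
    have : q ∈ {w | G.Adj x₃ w} := by rw [hNx3]; simp
    exact this
  have hadj_y3r : G.Adj y₃ r := by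
    have : r ∈ {w | G.Adj y₃ w} := by rw [hNy3]; simp
    exact this
  have hadj_y3s : G.Adj y₃ s := by
    have : s ∈ {w | G.Adj y₃ w} := by rw [hNy3]; simp
    exact this
  -- some non-equalities
  have hx3ny1 : x₃ ≠ y₁ := fun h => hnotRy1 (h ▸ hx3r)
  have hy3nx1 : y₃ ≠ x₁ := fun h => hnotRx1 (h ▸ hy3r)
  have hnadj_y2x3 : ¬ G.Adj y₂ x₃ := by
    intro h
    have : x₃ ∈ ({y₁, x₂, y₃} : Set V) := hNy2 ▸ h
    simp only [Set.mem_insert_iff, Set.mem_singleton_iff] at this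
    rcases this with h' | h' | h'
    · exact hx3ny1 h'
    · exact hx3adj.ne' h'
    · exact hx3y3 h'
  have hnadj_x2y3 : ¬ G.Adj x₂ y₃ := by
    intro h
    have : y₃ ∈ ({x₁, y₂, x₃} : Set V) := hNx2 ▸ h
    simp only [Set.mem_insert_iff, Set.mem_singleton_iff] at this
    rcases this with h' | h' | h'
    · exact hy3nx1 h'
    · exact hy3adj.ne' h'
    · exact hx3y3 h'.symm
  -- membership of the a's and b's in the left part
  have hG'x1a1 : G'.Adj x₁ a₁ := by
    rw [hG'adj]
    refine ⟨hadj_x1a1, fun hc => ?_, fun hc => ?_⟩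
    · rcases Sym2.eq_iff.mp hc with ⟨-, h'⟩ | ⟨h', -⟩
      · exact hxa1 h'.symm
      · exact hd12 h'
    · rcases Sym2.eq_iff.mp hc with ⟨h', -⟩ | ⟨h', -⟩
      · exact hd13 h'
      · exact hd14 h'
  have hG'x1a2 : G'.Adj x₁ a₂ := by
    rw [hG'adj]
    refine ⟨hadj_x1a2, fun hc => ?_, fun hc => ?_⟩
    · rcases Sym2.eq_iff.mp hc with ⟨-, h'⟩ | ⟨h', -⟩
      · exact hxa2 h'.symm
      · exact hd12 h'
    · rcases Sym2.eq_iff.mp hc with ⟨h', -⟩ | ⟨h', -⟩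
      · exact hd13 h'
      · exact hd14 h'
  have hG'y1b1 : G'.Adj y₁ b₁ := by
    rw [hG'adj]
    refine ⟨hadj_y1b1, fun hc => ?_, fun hc => ?_⟩
    · rcases Sym2.eq_iff.mp hc with ⟨h', -⟩ | ⟨h', -⟩
      · exact hd13 h'.symm
      · exact hd23 h'.symm
    · rcases Sym2.eq_iff.mp hc with ⟨-, h'⟩ | ⟨h', -⟩
      · exact hyb1 h'.symm
      · exact hd34 h'
  have hG'y1b2 : G'.Adj y₁ b₂ := by
    rw [hG'adj]
    refine ⟨hadj_y1b2, fun hc => ?_, fun hc => ?_⟩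
    · rcases Sym2.eq_iff.mp hc with ⟨h', -⟩ | ⟨h', -⟩
      · exact hd13 h'.symm
      · exact hd23 h'.symm
    · rcases Sym2.eq_iff.mp hc with ⟨-, h'⟩ | ⟨h', -⟩
      · exact hyb2 h'.symm
      · exact hd34 h'
  have hG'x3p : G'.Adj x₃ p := by
    rw [hG'adj]
    refine ⟨hadj_x3p, fun hc => ?_, fun hc => ?_⟩
    · rcases Sym2.eq_iff.mp hc with ⟨h', -⟩ | ⟨h', -⟩
      · exact hx3ne1 h'
      · exact hx3adj.ne' h'
    · rcases Sym2.eq_iff.mp hc with ⟨h', -⟩ | ⟨h', -⟩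
      · exact hx3ny1 h'
      · exact hx3ney2 h'
  have hG'x3q : G'.Adj x₃ q := by
    rw [hG'adj]
    refine ⟨hadj_x3q, fun hc => ?_, fun hc => ?_⟩
    · rcases Sym2.eq_iff.mp hc with ⟨h', -⟩ | ⟨h', -⟩
      · exact hx3ne1 h'
      · exact hx3adj.ne' h'
    · rcases Sym2.eq_iff.mp hc with ⟨h', -⟩ | ⟨h', -⟩
      · exact hx3ny1 h'
      · exact hx3ney2 h'
  have hG'y3r : G'.Adj y₃ r := by
    rw [hG'adj]
    refine ⟨hadj_y3r, fun hc => ?_, fun hc => ?_⟩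
    · rcases Sym2.eq_iff.mp hc with ⟨h', -⟩ | ⟨h', -⟩
      · exact hy3nx1 h'
      · exact hy3nex2 h'
    · rcases Sym2.eq_iff.mp hc with ⟨h', -⟩ | ⟨h', -⟩
      · exact hy3ne1 h'
      · exact hy3adj.ne' h'
  have hG'y3s : G'.Adj y₃ s := by
    rw [hG'adj]
    refine ⟨hadj_y3s, fun hc => ?_, fun hc => ?_⟩
    · rcases Sym2.eq_iff.mp hc with ⟨h', -⟩ | ⟨h', -⟩
      · exact hy3nx1 h'
      · exact hy3nex2 h'
    · rcases Sym2.eq_iff.mp hc with ⟨h', -⟩ | ⟨h', -⟩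
      · exact hy3ne1 h'
      · exact hy3adj.ne' h'
  have hra1 : G'.Reachable a₁ x₁ := hG'x1a1.symm.reachable
  have hra2 : G'.Reachable a₂ x₁ := hG'x1a2.symm.reachable
  have hrb1 : G'.Reachable b₁ x₁ := hG'y1b1.symm.reachable.trans hy1
  have hrb2 : G'.Reachable b₂ x₁ := hG'y1b2.symm.reachable.trans hy1
  have hrp : G'.Reachable p x₂ := hG'x3p.symm.reachable.trans hx3r
  have hrq : G'.Reachable q x₂ := hG'x3q.symm.reachable.trans hx3r
  have hrr : G'.Reachable r x₂ := hG'y3r.symm.reachable.trans hy3r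
  have hrs' : G'.Reachable s x₂ := hG'y3s.symm.reachable.trans hy3r
  -- membership of p,q,r,s in the right part minus x₂,y₂
  have hpny2 : p ≠ y₂ := fun h => hnadj_y2x3 (h ▸ hadj_x3p).symm
  have hqny2 : q ≠ y₂ := fun h => hnadj_y2x3 (h ▸ hadj_x3q).symm
  have hrnx2 : r ≠ x₂ := fun h => hnadj_x2y3 (h ▸ hadj_y3r).symm
  have hsnx2 : s ≠ x₂ := fun h => hnadj_x2y3 (h ▸ hadj_y3s).symm
  have hpR : p ∈ {u | G'.Reachable u x₂ ∧ u ≠ x₂ ∧ u ≠ y₂} := ⟨hrp, Ne.symm hxp, hpny2⟩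
  have hqR : q ∈ {u | G'.Reachable u x₂ ∧ u ≠ x₂ ∧ u ≠ y₂} := ⟨hrq, Ne.symm hxq, hqny2⟩
  have hrR : r ∈ {u | G'.Reachable u x₂ ∧ u ≠ x₂ ∧ u ≠ y₂} := ⟨hrr, hrnx2, Ne.symm hyr⟩
  have hsR : s ∈ {u | G'.Reachable u x₂ ∧ u ≠ x₂ ∧ u ≠ y₂} := ⟨hrs', hsnx2, Ne.symm hys⟩
  have hx3R : x₃ ∈ {u | G'.Reachable u x₂ ∧ u ≠ x₂ ∧ u ≠ y₂} := ⟨hx3r, hx3adj.ne', hx3ney2⟩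
  have hy3R : y₃ ∈ {u | G'.Reachable u x₂ ∧ u ≠ x₂ ∧ u ≠ y₂} := ⟨hy3r, hy3nex2, hy3adj.ne'⟩
  -- more non-equalities
  have hpny3 : p ≠ y₃ := fun h => hx3y3adj (h ▸ hadj_x3p)
  have hqny3 : q ≠ y₃ := fun h => hx3y3adj (h ▸ hadj_x3q)
  have hrnx3 : r ≠ x₃ := fun h => hx3y3adj (h ▸ hadj_y3r).symm
  have hsnx3 : s ≠ x₃ := fun h => hx3y3adj (h ▸ hadj_y3s).symm
  have ha1ny1 : a₁ ≠ y₁ := fun h => hx1y1 (h ▸ hadj_x1a1)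
  have ha2ny1 : a₂ ≠ y₁ := fun h => hx1y1 (h ▸ hadj_x1a2)
  have hb1nx1 : b₁ ≠ x₁ := fun h => hx1y1 (h ▸ hadj_y1b1).symm
  have hb2nx1 : b₂ ≠ x₁ := fun h => hx1y1 (h ▸ hadj_y1b2).symm
  -- abbreviations for the two pieces
  obtain ⟨C₁⟩ := h1
  obtain ⟨C₂⟩ := h2
  set L : Set V := {u | G'.Reachable u x₁} with hLdef
  set R : Set V := {u | G'.Reachable u x₂ ∧ u ≠ x₂ ∧ u ≠ y₂} with hRdef
  set H₁ : SimpleGraph L :=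
    addEdge (G'.induce L) ⟨x₁, SimpleGraph.Reachable.refl x₁⟩ ⟨y₁, hy1⟩ with hH1def
  set H₂ : SimpleGraph R :=
    addEdge (G'.induce R) ⟨x₃, hx3R⟩ ⟨y₃, hy3R⟩ with hH2def
  -- subtype elements
  have hx1L : x₁ ∈ L := SimpleGraph.Reachable.refl x₁
  have hy1L : y₁ ∈ L := hy1
  have ha1L : a₁ ∈ L := hra1
  have ha2L : a₂ ∈ L := hra2
  have hb1L : b₁ ∈ L := hrb1
  have hb2L : b₂ ∈ L := hrb2
  -- lifting square adjacencies into the left piece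
  have hLsq : ∀ (u v : V) (hu : u ∈ L) (hv : v ∈ L), (graphSquare G).Adj u v →
      (graphSquare H₁).Adj ⟨u, hu⟩ ⟨v, hv⟩ := by
    rintro u v hu hv ⟨hne, hGadj | ⟨w, hw1, hw2⟩⟩
    · refine ⟨by simpa [Subtype.ext_iff] using hne, Or.inl ?_⟩
      rw [hH1def, addEdge_adj]
      exact Or.inl (hGtoG'L u v hGadj hu hv)
    · by_cases hw : w ∈ L
      · refine ⟨by simpa [Subtype.ext_iff] using hne, Or.inr ⟨⟨w, hw⟩, ?_, ?_⟩⟩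
        · rw [hH1def, addEdge_adj]; exact Or.inl (hGtoG'L u w hw1 hu hw)
        · rw [hH1def, addEdge_adj]; exact Or.inl (hGtoG'L w v hw2 hw hv)
      · rcases hcross u w hw1 hu hw with ⟨huu, hww⟩ | ⟨huu, hww⟩
        · have hw2' : G.Adj x₂ v := hww ▸ hw2
          rcases hcross v x₂ hw2'.symm hv hnotL2 with ⟨hvv, -⟩ | ⟨-, hcon⟩
          · exact absurd (huu.trans hvv.symm) hne
          · exact absurd hcon hd24
        · have hw2' : G.Adj y₂ v := hww ▸ hw2
          rcases hcross v y₂ hw2'.symm hv hnotLy2 with ⟨-, hcon⟩ | ⟨hvv, -⟩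
          · exact absurd hcon.symm hd24
          · exact absurd (huu.trans hvv.symm) hne
  -- lifting square adjacencies into the right piece
  have hRsq : ∀ (u v : V) (hu : u ∈ R) (hv : v ∈ R), (graphSquare G).Adj u v →
      (graphSquare H₂).Adj ⟨u, hu⟩ ⟨v, hv⟩ := by
    rintro u v hu hv ⟨hne, hGadj | ⟨w, hw1, hw2⟩⟩
    · refine ⟨by simpa [Subtype.ext_iff] using hne, Or.inl ?_⟩
      rw [hH2def, addEdge_adj]
      exact Or.inl (hGtoG'R u v hGadj hu.1 hv.1)
    · by_cases hwx2 : w = x₂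
      · subst hwx2
        have hu' : u ∈ ({x₁, y₂, x₃} : Set V) := hNx2 ▸ hw1.symm
        have hv' : v ∈ ({x₁, y₂, x₃} : Set V) := hNx2 ▸ hw2
        simp only [Set.mem_insert_iff, Set.mem_singleton_iff] at hu' hv'
        rcases hu' with rfl | rfl | rfl
        · exact absurd hu.1 hnotRx1
        · exact absurd rfl hu.2.2
        · rcases hv' with rfl | rfl | rfl
          · exact absurd hv.1 hnotRx1
          · exact absurd rfl hv.2.2
          · exact absurd rfl hne
      by_cases hwy2 : w = y₂
      · subst hwy2
        have hu' : u ∈ ({y₁, x₂, y₃} : Set V) := hNy2 ▸ hw1.symm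
        have hv' : v ∈ ({y₁, x₂, y₃} : Set V) := hNy2 ▸ hw2
        simp only [Set.mem_insert_iff, Set.mem_singleton_iff] at hu' hv'
        rcases hu' with rfl | rfl | rfl
        · exact absurd hu.1 hnotRy1
        · exact absurd rfl hu.2.1
        · rcases hv' with rfl | rfl | rfl
          · exact absurd hv.1 hnotRy1
          · exact absurd rfl hv.2.1
          · exact absurd rfl hne
      · have hwnotL : ¬ G'.Reachable w x₁ := by
          intro hwL
          rcases hcross w u hw1.symm hwL (hdisj u hu.1) with ⟨-, h'⟩ | ⟨-, h'⟩
          · exact hu.2.1 h'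
          · exact hu.2.2 h'
        have hwR : w ∈ R := ⟨(hall w).resolve_left hwnotL, hwx2, hwy2⟩
        refine ⟨by simpa [Subtype.ext_iff] using hne, Or.inr ⟨⟨w, hwR⟩, ?_, ?_⟩⟩
        · rw [hH2def, addEdge_adj]; exact Or.inl (hGtoG'R u w hw1 hu.1 hwR.1)
        · rw [hH2def, addEdge_adj]; exact Or.inl (hGtoG'R w v hw2 hwR.1 hv.1)
  -- square adjacencies in H₁ among x₁, y₁, a₁, a₂ and b₁, b₂
  have hH1edge_xy : H₁.Adj ⟨x₁, hx1L⟩ ⟨y₁, hy1L⟩ := by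
    rw [hH1def, addEdge_adj]
    exact Or.inr ⟨rfl, by simpa [Subtype.ext_iff] using hd13⟩
  have hH1edge_xa1 : H₁.Adj ⟨x₁, hx1L⟩ ⟨a₁, ha1L⟩ := by
    rw [hH1def, addEdge_adj]; exact Or.inl hG'x1a1
  have hH1edge_xa2 : H₁.Adj ⟨x₁, hx1L⟩ ⟨a₂, ha2L⟩ := by
    rw [hH1def, addEdge_adj]; exact Or.inl hG'x1a2
  have hH1edge_yb1 : H₁.Adj ⟨y₁, hy1L⟩ ⟨b₁, hb1L⟩ := by
    rw [hH1def, addEdge_adj]; exact Or.inl hG'y1b1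
  have hH1edge_yb2 : H₁.Adj ⟨y₁, hy1L⟩ ⟨b₂, hb2L⟩ := by
    rw [hH1def, addEdge_adj]; exact Or.inl hG'y1b2
  have sq_xy : (graphSquare H₁).Adj ⟨x₁, hx1L⟩ ⟨y₁, hy1L⟩ :=
    ⟨by simpa [Subtype.ext_iff] using hd13, Or.inl hH1edge_xy⟩
  have sq_xa1 : (graphSquare H₁).Adj ⟨x₁, hx1L⟩ ⟨a₁, ha1L⟩ :=
    ⟨by simpa [Subtype.ext_iff] using (hadj_x1a1.ne : x₁ ≠ a₁), Or.inl hH1edge_xa1⟩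
  have sq_xa2 : (graphSquare H₁).Adj ⟨x₁, hx1L⟩ ⟨a₂, ha2L⟩ :=
    ⟨by simpa [Subtype.ext_iff] using (hadj_x1a2.ne : x₁ ≠ a₂), Or.inl hH1edge_xa2⟩
  have sq_ya1 : (graphSquare H₁).Adj ⟨y₁, hy1L⟩ ⟨a₁, ha1L⟩ :=
    ⟨by simpa [Subtype.ext_iff] using (Ne.symm ha1ny1), Or.inr ⟨⟨x₁, hx1L⟩, hH1edge_xy.symm, hH1edge_xa1⟩⟩
  have sq_ya2 : (graphSquare H₁).Adj ⟨y₁, hy1L⟩ ⟨a₂, ha2L⟩ :=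
    ⟨by simpa [Subtype.ext_iff] using (Ne.symm ha2ny1), Or.inr ⟨⟨x₁, hx1L⟩, hH1edge_xy.symm, hH1edge_xa2⟩⟩
  have sq_a1a2 : (graphSquare H₁).Adj ⟨a₁, ha1L⟩ ⟨a₂, ha2L⟩ :=
    ⟨by simpa [Subtype.ext_iff] using ha12, Or.inr ⟨⟨x₁, hx1L⟩, hH1edge_xa1.symm, hH1edge_xa2⟩⟩
  have sq_xb1 : (graphSquare H₁).Adj ⟨x₁, hx1L⟩ ⟨b₁, hb1L⟩ :=
    ⟨by simpa [Subtype.ext_iff] using (Ne.symm hb1nx1), Or.inr ⟨⟨y₁, hy1L⟩, hH1edge_xy, hH1edge_yb1⟩⟩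
  have sq_xb2 : (graphSquare H₁).Adj ⟨x₁, hx1L⟩ ⟨b₂, hb2L⟩ :=
    ⟨by simpa [Subtype.ext_iff] using (Ne.symm hb2nx1), Or.inr ⟨⟨y₁, hy1L⟩, hH1edge_xy, hH1edge_yb2⟩⟩
  have sq_yb1 : (graphSquare H₁).Adj ⟨y₁, hy1L⟩ ⟨b₁, hb1L⟩ :=
    ⟨by simpa [Subtype.ext_iff] using (hadj_y1b1.ne : y₁ ≠ b₁), Or.inl hH1edge_yb1⟩
  have sq_yb2 : (graphSquare H₁).Adj ⟨y₁, hy1L⟩ ⟨b₂, hb2L⟩ :=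
    ⟨by simpa [Subtype.ext_iff] using (hadj_y1b2.ne : y₁ ≠ b₂), Or.inl hH1edge_yb2⟩
  -- square adjacencies in H₂ among x₃, y₃, p, q, r, s
  have hH2edge_xy : H₂.Adj ⟨x₃, hx3R⟩ ⟨y₃, hy3R⟩ := by
    rw [hH2def, addEdge_adj]
    exact Or.inr ⟨rfl, by simpa [Subtype.ext_iff] using hx3y3⟩
  have hH2edge_xp : H₂.Adj ⟨x₃, hx3R⟩ ⟨p, hpR⟩ := by
    rw [hH2def, addEdge_adj]; exact Or.inl hG'x3p
  have hH2edge_xq : H₂.Adj ⟨x₃, hx3R⟩ ⟨q, hqR⟩ := by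
    rw [hH2def, addEdge_adj]; exact Or.inl hG'x3q
  have hH2edge_yr : H₂.Adj ⟨y₃, hy3R⟩ ⟨r, hrR⟩ := by
    rw [hH2def, addEdge_adj]; exact Or.inl hG'y3r
  have hH2edge_ys : H₂.Adj ⟨y₃, hy3R⟩ ⟨s, hsR⟩ := by
    rw [hH2def, addEdge_adj]; exact Or.inl hG'y3s
  have sq2_xy : (graphSquare H₂).Adj ⟨x₃, hx3R⟩ ⟨y₃, hy3R⟩ :=
    ⟨by simpa [Subtype.ext_iff] using hx3y3, Or.inl hH2edge_xy⟩
  have sq2_xp : (graphSquare H₂).Adj ⟨x₃, hx3R⟩ ⟨p, hpR⟩ :=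
    ⟨by simpa [Subtype.ext_iff] using (hadj_x3p.ne : x₃ ≠ p), Or.inl hH2edge_xp⟩
  have sq2_xq : (graphSquare H₂).Adj ⟨x₃, hx3R⟩ ⟨q, hqR⟩ :=
    ⟨by simpa [Subtype.ext_iff] using (hadj_x3q.ne : x₃ ≠ q), Or.inl hH2edge_xq⟩
  have sq2_yp : (graphSquare H₂).Adj ⟨y₃, hy3R⟩ ⟨p, hpR⟩ :=
    ⟨by simpa [Subtype.ext_iff] using (Ne.symm hpny3), Or.inr ⟨⟨x₃, hx3R⟩, hH2edge_xy.symm, hH2edge_xp⟩⟩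
  have sq2_yq : (graphSquare H₂).Adj ⟨y₃, hy3R⟩ ⟨q, hqR⟩ :=
    ⟨by simpa [Subtype.ext_iff] using (Ne.symm hqny3), Or.inr ⟨⟨x₃, hx3R⟩, hH2edge_xy.symm, hH2edge_xq⟩⟩
  have sq2_pq : (graphSquare H₂).Adj ⟨p, hpR⟩ ⟨q, hqR⟩ :=
    ⟨by simpa [Subtype.ext_iff] using hpq, Or.inr ⟨⟨x₃, hx3R⟩, hH2edge_xp.symm, hH2edge_xq⟩⟩
  -- construct the recoloring permutation σ
  obtain ⟨σ, hσ1, hσ2, hσ3, hσ4⟩ := exists_perm_four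
    (C₂ ⟨x₃, hx3R⟩) (C₂ ⟨y₃, hy3R⟩) (C₂ ⟨p, hpR⟩) (C₂ ⟨q, hqR⟩)
    (C₁ ⟨y₁, hy1L⟩) (C₁ ⟨x₁, hx1L⟩) (C₁ ⟨a₁, ha1L⟩) (C₁ ⟨a₂, ha2L⟩)
    (C₂.valid sq2_xy) (C₂.valid sq2_xp) (C₂.valid sq2_xq)
    (C₂.valid sq2_yp) (C₂.valid sq2_yq) (C₂.valid sq2_pq)
    (Ne.symm (C₁.valid sq_xy)) (C₁.valid sq_ya1) (C₁.valid sq_ya2)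
    (C₁.valid sq_xa1) (C₁.valid sq_xa2) (C₁.valid sq_a1a2)
  -- choose the colors of y₂ and x₂
  have hcard6 : ({C₁ ⟨x₁, hx1L⟩, C₁ ⟨y₁, hy1L⟩, C₁ ⟨b₁, hb1L⟩, C₁ ⟨b₂, hb2L⟩,
      σ (C₂ ⟨r, hrR⟩), σ (C₂ ⟨s, hsR⟩)} : Finset (Fin 7)).card ≤ 6 := by
    refine le_trans (Finset.card_insert_le _ _) (Nat.succ_le_succ ?_)
    refine le_trans (Finset.card_insert_le _ _) (Nat.succ_le_succ ?_)
    refine le_trans (Finset.card_insert_le _ _) (Nat.succ_le_succ ?_)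
    refine le_trans (Finset.card_insert_le _ _) (Nat.succ_le_succ ?_)
    refine le_trans (Finset.card_insert_le _ _) (Nat.succ_le_succ ?_)
    simp
  obtain ⟨β, hβ⟩ := exists_notmem_of_card_le hcard6
  simp only [Finset.mem_insert, Finset.mem_singleton, not_or] at hβ
  obtain ⟨hβ1, hβ2, hβ3, hβ4, hβ5, hβ6⟩ := hβ
  have hcard5 : ({C₁ ⟨x₁, hx1L⟩, C₁ ⟨y₁, hy1L⟩, C₁ ⟨a₁, ha1L⟩, C₁ ⟨a₂, ha2L⟩,
      β} : Finset (Fin 7)).card ≤ 6 := by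
    refine le_trans (Finset.card_insert_le _ _) (Nat.succ_le_succ ?_)
    refine le_trans (Finset.card_insert_le _ _) (Nat.succ_le_succ ?_)
    refine le_trans (Finset.card_insert_le _ _) (Nat.succ_le_succ ?_)
    refine le_trans (Finset.card_insert_le _ _) (Nat.succ_le_succ ?_)
    simp
  obtain ⟨α, hα⟩ := exists_notmem_of_card_le hcard5
  simp only [Finset.mem_insert, Finset.mem_singleton, not_or] at hα
  obtain ⟨hα1, hα2, hα3, hα4, hα5⟩ := hα
  -- the coloring
  set cc : V → Fin 7 := fun v =>
    if hv2 : v = x₂ then α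
    else if hvy : v = y₂ then β
    else if h : G'.Reachable v x₁ then C₁ ⟨v, h⟩
    else σ (C₂ ⟨v, ⟨(hall v).resolve_left h, hv2, hvy⟩⟩) with hccdef
  have ccx2 : cc x₂ = α := by
    simp [hccdef]
  have ccy2 : cc y₂ = β := by
    have h' : y₂ ≠ x₂ := Ne.symm hd24
    simp [hccdef, h']
  have ccL : ∀ (v : V) (h : v ∈ L), cc v = C₁ ⟨v, h⟩ := by
    intro v h
    have h' : G'.Reachable v x₁ := h
    have hv2 : v ≠ x₂ := fun e => hnotL2 (e ▸ h')
    have hvy : v ≠ y₂ := fun e => hnotLy2 (e ▸ h')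
    simp [hccdef, hv2, hvy, h']
  have ccR : ∀ (v : V) (h : v ∈ R), cc v = σ (C₂ ⟨v, h⟩) := by
    intro v h
    have hnL : ¬ G'.Reachable v x₁ := hdisj v h.1
    simp [hccdef, h.2.1, h.2.2, hnL]
  -- the key facts about the colors near x₂
  have key2 : ∀ v : V, (graphSquare G).Adj x₂ v → α ≠ cc v := by
    rintro v ⟨hne, hGadj | ⟨w, hw1, hw2⟩⟩
    · have hv : v ∈ ({x₁, y₂, x₃} : Set V) := hNx2 ▸ hGadj
      simp only [Set.mem_insert_iff, Set.mem_singleton_iff] at hv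
      rcases hv with rfl | rfl | rfl
      · rw [ccL v hx1L]; exact hα1
      · rw [ccy2]; exact hα5
      · rw [ccR v hx3R, hσ1]; exact hα2
    · have hw : w ∈ ({x₁, y₂, x₃} : Set V) := hNx2 ▸ hw1
      simp only [Set.mem_insert_iff, Set.mem_singleton_iff] at hw
      rcases hw with rfl | rfl | rfl
      · have hv : v ∈ ({x₂, a₁, a₂} : Set V) := hNx1 ▸ hw2
        simp only [Set.mem_insert_iff, Set.mem_singleton_iff] at hv
        rcases hv with rfl | rfl | rfl
        · exact absurd rfl hne
        · rw [ccL v ha1L]; exact hα3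
        · rw [ccL v ha2L]; exact hα4
      · have hv : v ∈ ({y₁, x₂, y₃} : Set V) := hNy2 ▸ hw2
        simp only [Set.mem_insert_iff, Set.mem_singleton_iff] at hv
        rcases hv with rfl | rfl | rfl
        · rw [ccL v hy1L]; exact hα2
        · exact absurd rfl hne
        · rw [ccR v hy3R, hσ2]; exact hα1
      · have hv : v ∈ ({x₂, p, q} : Set V) := hNx3 ▸ hw2
        simp only [Set.mem_insert_iff, Set.mem_singleton_iff] at hv
        rcases hv with rfl | rfl | rfl
        · exact absurd rfl hne
        · rw [ccR v hpR, hσ3]; exact hα3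
        · rw [ccR v hqR, hσ4]; exact hα4
  -- the key facts about the colors near y₂
  have key2y : ∀ v : V, (graphSquare G).Adj y₂ v → β ≠ cc v := by
    rintro v ⟨hne, hGadj | ⟨w, hw1, hw2⟩⟩
    · have hv : v ∈ ({y₁, x₂, y₃} : Set V) := hNy2 ▸ hGadj
      simp only [Set.mem_insert_iff, Set.mem_singleton_iff] at hv
      rcases hv with rfl | rfl | rfl
      · rw [ccL v hy1L]; exact hβ2
      · rw [ccx2]; exact Ne.symm hα5
      · rw [ccR v hy3R, hσ2]; exact hβ1
    · have hw : w ∈ ({y₁, x₂, y₃} : Set V) := hNy2 ▸ hw1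
      simp only [Set.mem_insert_iff, Set.mem_singleton_iff] at hw
      rcases hw with rfl | rfl | rfl
      · have hv : v ∈ ({y₂, b₁, b₂} : Set V) := hNy1 ▸ hw2
        simp only [Set.mem_insert_iff, Set.mem_singleton_iff] at hv
        rcases hv with rfl | rfl | rfl
        · exact absurd rfl hne
        · rw [ccL v hb1L]; exact hβ3
        · rw [ccL v hb2L]; exact hβ4
      · have hv : v ∈ ({x₁, y₂, x₃} : Set V) := hNx2 ▸ hw2
        simp only [Set.mem_insert_iff, Set.mem_singleton_iff] at hv
        rcases hv with rfl | rfl | rfl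
        · rw [ccL v hx1L]; exact hβ1
        · exact absurd rfl hne
        · rw [ccR v hx3R, hσ1]; exact hβ2
      · have hv : v ∈ ({y₂, r, s} : Set V) := hNy3 ▸ hw2
        simp only [Set.mem_insert_iff, Set.mem_singleton_iff] at hv
        rcases hv with rfl | rfl | rfl
        · exact absurd rfl hne
        · rw [ccR v hrR]; exact hβ5
        · rw [ccR v hsR]; exact hβ6
  -- cross adjacencies between the two parts
  have keyLR : ∀ (u v : V) (hu : u ∈ L) (hv : v ∈ R), (graphSquare G).Adj u v →
      cc u ≠ cc v := by
    rintro u v hu hv ⟨hne, hGadj | ⟨w, hw1, hw2⟩⟩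
    · rcases hcross u v hGadj hu (hdisj v hv.1) with ⟨rfl, rfl⟩ | ⟨rfl, rfl⟩
      · exact absurd rfl hv.2.1
      · exact absurd rfl hv.2.2
    · by_cases hwL : w ∈ L
      · rcases hcross w v hw2 hwL (hdisj v hv.1) with ⟨rfl, rfl⟩ | ⟨rfl, rfl⟩
        · exact absurd rfl hv.2.1
        · exact absurd rfl hv.2.2
      · rcases hcross u w hw1 hu hwL with ⟨huu, hww⟩ | ⟨huu, hww⟩
        · have hw2' : G.Adj x₂ v := hww ▸ hw2
          have hv' : v ∈ ({x₁, y₂, x₃} : Set V) := hNx2 ▸ hw2'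
          simp only [Set.mem_insert_iff, Set.mem_singleton_iff] at hv'
          rcases hv' with hvv | hvv | hvv
          · exact absurd (hvv ▸ hv.1) hnotRx1
          · exact absurd hvv hv.2.2
          · rw [huu, hvv, ccL x₁ hx1L, ccR x₃ hx3R, hσ1]
            exact C₁.valid sq_xy
        · have hw2' : G.Adj y₂ v := hww ▸ hw2
          have hv' : v ∈ ({y₁, x₂, y₃} : Set V) := hNy2 ▸ hw2'
          simp only [Set.mem_insert_iff, Set.mem_singleton_iff] at hv'
          rcases hv' with hvv | hvv | hvv
          · exact absurd (hvv ▸ hv.1) hnotRy1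
          · exact absurd hvv hv.2.1
          · rw [huu, hvv, ccL y₁ hy1L, ccR y₃ hy3R, hσ2]
            exact Ne.symm (C₁.valid sq_xy)
  -- assemble everything
  have valid : ∀ u v : V, (graphSquare G).Adj u v → cc u ≠ cc v := by
    intro u v hadj
    by_cases hu2 : u = x₂
    · subst hu2
      rw [ccx2]
      exact key2 v hadj
    by_cases hv2 : v = x₂
    · subst hv2
      rw [ccx2]
      exact (key2 u hadj.symm).symm
    by_cases huy : u = y₂
    · subst huy
      rw [ccy2]
      exact key2y v hadj
    by_cases hvy : v = y₂
    · subst hvy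
      rw [ccy2]
      exact (key2y u hadj.symm).symm
    rcases hall u with hu | hu
    · rcases hall v with hv | hv
      · rw [ccL u hu, ccL v hv]
        exact C₁.valid (hLsq u v hu hv hadj)
      · exact keyLR u v hu ⟨hv, hv2, hvy⟩ hadj
    · rcases hall v with hv | hv
      · exact (keyLR v u hv ⟨hu, hu2, huy⟩ hadj.symm).symm
      · have huR : u ∈ R := ⟨hu, hu2, huy⟩
        have hvR : v ∈ R := ⟨hv, hv2, hvy⟩
        rw [ccR u huR, ccR v hvR]
        exact fun h => C₂.valid (hRsq u v huR hvR hadj) (σ.injective h)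
  exact ⟨SimpleGraph.Coloring.mk cc (fun {u v} h => valid u v h)⟩
end

section
/- Let G be a cubic graph containing two distinct 4-cycles x x₁ x₂ y x and x y x₃ x₄ x sharing the edge xy, where the six vertices x, y, x₁, x₂, x₃, x₄ are pairwise distinct. For i = 1, 2, 3, 4, let x_i' be the third neighbor of x_i, and assume x₁', x₂', x₃', x₄' are pairwise distinct and distinct from x, y, x₁, x₂, x₃, x₄. If the square (G − xy)² is 7-colorable, then G² is 7-colorable. -/
private lemma exists_ne6 (a b c d e f : Fin 7) :
    ∃ z : Fin 7, z ≠ a ∧ z ≠ b ∧ z ≠ c ∧ z ≠ d ∧ z ≠ e ∧ z ≠ f := by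
  by_contra hc
  push_neg at hc
  have hsub : (Finset.univ : Finset (Fin 7)) ⊆ {a,b,c,d,e,f} := by
    intro z _
    by_contra hz
    simp only [Finset.mem_insert, Finset.mem_singleton, not_or] at hz
    obtain ⟨h1,h2,h3,h4,h5,h6⟩ := hz
    exact h6 (hc z h1 h2 h3 h4 h5)
  have hle := Finset.card_le_card hsub
  have hcard : ({a,b,c,d,e,f} : Finset (Fin 7)).card ≤ 6 := by
    refine le_trans (Finset.card_insert_le _ _) (Nat.succ_le_succ ?_)
    refine le_trans (Finset.card_insert_le _ _) (Nat.succ_le_succ ?_)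
    refine le_trans (Finset.card_insert_le _ _) (Nat.succ_le_succ ?_)
    refine le_trans (Finset.card_insert_le _ _) (Nat.succ_le_succ ?_)
    refine le_trans (Finset.card_insert_le _ _) (Nat.succ_le_succ ?_)
    simp
  simp only [Finset.card_univ, Fintype.card_fin] at hle
  omega

private lemma select_colors (α β γ δ p1 p2 q1 q2 r1 r2 s1 s2 : Fin 7) :
    ∃ c1 c2 c3 c4 cx cy : Fin 7,
      (c1 ≠ α ∧ c1 ≠ γ ∧ c1 ≠ p1 ∧ c1 ≠ p2) ∧
      (c2 ≠ γ ∧ c2 ≠ α ∧ c2 ≠ q1 ∧ c2 ≠ q2) ∧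
      (c3 ≠ δ ∧ c3 ≠ β ∧ c3 ≠ r1 ∧ c3 ≠ r2) ∧
      (c4 ≠ β ∧ c4 ≠ δ ∧ c4 ≠ s1 ∧ c4 ≠ s2) ∧
      (c1 ≠ c2 ∧ c2 ≠ c3 ∧ c3 ≠ c4 ∧ c4 ≠ c1) ∧
      (cx ≠ c1 ∧ cx ≠ c2 ∧ cx ≠ c3 ∧ cx ≠ c4 ∧ cx ≠ α ∧ cx ≠ β ∧ cx ≠ cy) ∧
      (cy ≠ c1 ∧ cy ≠ c2 ∧ cy ≠ c3 ∧ cy ≠ c4 ∧ cy ≠ γ ∧ cy ≠ δ) := by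
  by_cases h13 : ∃ z : Fin 7, (z ≠ α ∧ z ≠ γ ∧ z ≠ p1 ∧ z ≠ p2) ∧ (z ≠ δ ∧ z ≠ β ∧ z ≠ r1 ∧ z ≠ r2)
  · obtain ⟨a, ⟨ha1,ha2,ha3,ha4⟩, ⟨hb1,hb2,hb3,hb4⟩⟩ := h13
    obtain ⟨c2, hc2a,hc2b,hc2c,hc2d,hc2e,-⟩ := exists_ne6 γ α q1 q2 a a
    obtain ⟨c4, hc4a,hc4b,hc4c,hc4d,hc4e,-⟩ := exists_ne6 β δ s1 s2 a a
    obtain ⟨cy, hy1,hy2,hy3,hy4,hy5,hy6⟩ := exists_ne6 a c2 a c4 γ δ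
    obtain ⟨cx, hx1,hx2,hx3,hx4,hx5,hx6⟩ := exists_ne6 a c2 c4 α β cy
    exact ⟨a, c2, a, c4, cx, cy, ⟨ha1,ha2,ha3,ha4⟩, ⟨hc2a,hc2b,hc2c,hc2d⟩,
      ⟨hb1,hb2,hb3,hb4⟩, ⟨hc4a,hc4b,hc4c,hc4d⟩, ⟨hc2e.symm, hc2e, hc4e.symm, hc4e⟩,
      ⟨hx1, hx2, hx1, hx3, hx4, hx5, hx6⟩, ⟨hy1,hy2,hy3,hy4,hy5,hy6⟩⟩
  by_cases h24 : ∃ z : Fin 7, (z ≠ γ ∧ z ≠ α ∧ z ≠ q1 ∧ z ≠ q2) ∧ (z ≠ β ∧ z ≠ δ ∧ z ≠ s1 ∧ z ≠ s2)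
  · obtain ⟨a, ⟨ha1,ha2,ha3,ha4⟩, ⟨hb1,hb2,hb3,hb4⟩⟩ := h24
    obtain ⟨c1, hc1a,hc1b,hc1c,hc1d,hc1e,-⟩ := exists_ne6 α γ p1 p2 a a
    obtain ⟨c3, hc3a,hc3b,hc3c,hc3d,hc3e,-⟩ := exists_ne6 δ β r1 r2 a a
    obtain ⟨cy, hy1,hy2,hy3,hy4,hy5,hy6⟩ := exists_ne6 c1 a c3 a γ δ
    obtain ⟨cx, hx1,hx2,hx3,hx4,hx5,hx6⟩ := exists_ne6 c1 a c3 α β cy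
    exact ⟨c1, a, c3, a, cx, cy, ⟨hc1a,hc1b,hc1c,hc1d⟩, ⟨ha1,ha2,ha3,ha4⟩,
      ⟨hc3a,hc3b,hc3c,hc3d⟩, ⟨hb1,hb2,hb3,hb4⟩, ⟨hc1e, hc3e.symm, hc3e, hc1e.symm⟩,
      ⟨hx1, hx2, hx3, hx2, hx4, hx5, hx6⟩, ⟨hy1,hy2,hy3,hy4,hy5,hy6⟩⟩
  · have hx : α = β ∨ (β ≠ α ∧ β ≠ γ ∧ β ≠ p1 ∧ β ≠ p2) ∨ (α ≠ δ ∧ α ≠ β ∧ α ≠ r1 ∧ α ≠ r2) := by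
      by_contra hcon
      push_neg at hcon
      obtain ⟨hab, hb1, ha3⟩ := hcon
      set FB1 : Finset (Fin 7) := {α, γ, p1, p2} with hFB1
      set FB3 : Finset (Fin 7) := {δ, β, r1, r2} with hFB3
      have hmemb1 : β ∈ FB1 := by
        by_contra hm
        simp only [hFB1, Finset.mem_insert, Finset.mem_singleton, not_or] at hm
        exact hm.2.2.2 (hb1 hm.1 hm.2.1 hm.2.2.1)
      have hmema3 : α ∈ FB3 := by
        by_contra hm
        simp only [hFB3, Finset.mem_insert, Finset.mem_singleton, not_or] at hm
        exact hm.2.2.2 (ha3 hm.1 hm.2.1 hm.2.2.1)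
      have hmema1 : α ∈ FB1 := by simp [hFB1]
      have hmemb3 : β ∈ FB3 := by simp [hFB3]
      have hall : ∀ z : Fin 7, z ∈ FB1 ∨ z ∈ FB3 := by
        intro z
        by_contra hz
        push_neg at hz
        obtain ⟨hz1, hz3⟩ := hz
        simp only [hFB1, hFB3, Finset.mem_insert, Finset.mem_singleton, not_or] at hz1 hz3
        exact h13 ⟨z, ⟨hz1.1, hz1.2.1, hz1.2.2.1, hz1.2.2.2⟩, ⟨hz3.1, hz3.2.1, hz3.2.2.1, hz3.2.2.2⟩⟩
      have hsub : ({α, β} : Finset (Fin 7)) ⊆ FB1 ∩ FB3 := by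
        intro z hz
        simp only [Finset.mem_insert, Finset.mem_singleton] at hz
        rcases hz with rfl | rfl
        · exact Finset.mem_inter.mpr ⟨hmema1, hmema3⟩
        · exact Finset.mem_inter.mpr ⟨hmemb1, hmemb3⟩
      have h2 : 2 ≤ (FB1 ∩ FB3).card := by
        have hle := Finset.card_le_card hsub
        rwa [Finset.card_insert_of_notMem (by simpa using hab), Finset.card_singleton] at hle
      have hu : (Finset.univ : Finset (Fin 7)) ⊆ FB1 ∪ FB3 := by
        intro z _
        rcases hall z with h | h
        · exact Finset.mem_union_left _ h
        · exact Finset.mem_union_right _ h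
      have h7 : 7 ≤ (FB1 ∪ FB3).card := by
        have := Finset.card_le_card hu
        simpa using this
      have hc1 : FB1.card ≤ 4 := by
        refine le_trans (Finset.card_insert_le _ _) (Nat.succ_le_succ ?_)
        refine le_trans (Finset.card_insert_le _ _) (Nat.succ_le_succ ?_)
        refine le_trans (Finset.card_insert_le _ _) (Nat.succ_le_succ ?_)
        simp
      have hc3 : FB3.card ≤ 4 := by
        refine le_trans (Finset.card_insert_le _ _) (Nat.succ_le_succ ?_)
        refine le_trans (Finset.card_insert_le _ _) (Nat.succ_le_succ ?_)
        refine le_trans (Finset.card_insert_le _ _) (Nat.succ_le_succ ?_)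
        simp
      have hui := Finset.card_union_add_card_inter FB1 FB3
      omega
    rcases hx with hab | ⟨hb1a, hb1b, hb1c, hb1d⟩ | ⟨ha3a, ha3b, ha3c, ha3d⟩
    · obtain ⟨c1, hc1a,hc1b,hc1c,hc1d,-,-⟩ := exists_ne6 α γ p1 p2 α α
      obtain ⟨c2, hc2a,hc2b,hc2c,hc2d,hc2e,-⟩ := exists_ne6 γ α q1 q2 c1 c1
      obtain ⟨c3, hc3a,hc3b,hc3c,hc3d,hc3e,-⟩ := exists_ne6 δ β r1 r2 c2 c2
      obtain ⟨c4, hc4a,hc4b,hc4c,hc4d,hc4e,hc4f⟩ := exists_ne6 β δ s1 s2 c1 c3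
      obtain ⟨cy, hy1,hy2,hy3,hy4,hy5,hy6⟩ := exists_ne6 c1 c2 c3 c4 γ δ
      obtain ⟨cx, hx1,hx2,hx3,hx4,hx5,hx6⟩ := exists_ne6 c1 c2 c3 c4 α cy
      exact ⟨c1, c2, c3, c4, cx, cy, ⟨hc1a,hc1b,hc1c,hc1d⟩, ⟨hc2a,hc2b,hc2c,hc2d⟩,
        ⟨hc3a,hc3b,hc3c,hc3d⟩, ⟨hc4a,hc4b,hc4c,hc4d⟩, ⟨hc2e.symm, hc3e.symm, hc4f.symm, hc4e⟩,
        ⟨hx1, hx2, hx3, hx4, hx5, hab ▸ hx5, hx6⟩, ⟨hy1,hy2,hy3,hy4,hy5,hy6⟩⟩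
    · obtain ⟨c2, hc2a,hc2b,hc2c,hc2d,hc2e,-⟩ := exists_ne6 γ α q1 q2 β β
      obtain ⟨c3, hc3a,hc3b,hc3c,hc3d,hc3e,-⟩ := exists_ne6 δ β r1 r2 c2 c2
      obtain ⟨c4, hc4a,hc4b,hc4c,hc4d,hc4e,-⟩ := exists_ne6 β δ s1 s2 c3 c3
      obtain ⟨cy, hy1,hy2,hy3,hy4,hy5,hy6⟩ := exists_ne6 β c2 c3 c4 γ δ
      obtain ⟨cx, hx1,hx2,hx3,hx4,hx5,hx6⟩ := exists_ne6 β c2 c3 c4 α cy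
      exact ⟨β, c2, c3, c4, cx, cy, ⟨hb1a,hb1b,hb1c,hb1d⟩, ⟨hc2a,hc2b,hc2c,hc2d⟩,
        ⟨hc3a,hc3b,hc3c,hc3d⟩, ⟨hc4a,hc4b,hc4c,hc4d⟩, ⟨hc2e.symm, hc3e.symm, hc4e.symm, hc4a⟩,
        ⟨hx1, hx2, hx3, hx4, hx5, hx1, hx6⟩, ⟨hy1,hy2,hy3,hy4,hy5,hy6⟩⟩
    · obtain ⟨c2, hc2a,hc2b,hc2c,hc2d,-,-⟩ := exists_ne6 γ α q1 q2 γ γ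
      obtain ⟨c4, hc4a,hc4b,hc4c,hc4d,hc4e,-⟩ := exists_ne6 β δ s1 s2 α α
      obtain ⟨c1, hc1a,hc1b,hc1c,hc1d,hc1e,hc1f⟩ := exists_ne6 α γ p1 p2 c2 c4
      obtain ⟨cy, hy1,hy2,hy3,hy4,hy5,hy6⟩ := exists_ne6 c1 c2 α c4 γ δ
      obtain ⟨cx, hx1,hx2,hx3,hx4,hx5,hx6⟩ := exists_ne6 c1 c2 α c4 β cy
      exact ⟨c1, c2, α, c4, cx, cy, ⟨hc1a,hc1b,hc1c,hc1d⟩, ⟨hc2a,hc2b,hc2c,hc2d⟩,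
        ⟨ha3a,ha3b,ha3c,ha3d⟩, ⟨hc4a,hc4b,hc4c,hc4d⟩, ⟨hc1e, hc2b, hc4e.symm, hc1f.symm⟩,
        ⟨hx1, hx2, hx3, hx4, hx3, hx5, hx6⟩, ⟨hy1,hy2,hy3,hy4,hy5,hy6⟩⟩

private lemma nbhd_eq_three {V : Type*} [Fintype V] (G : SimpleGraph V) (v a b c : V)
    (ha : G.Adj v a) (hb : G.Adj v b) (hc : G.Adj v c)
    (hab : a ≠ b) (hac : a ≠ c) (hbc : b ≠ c)
    (h3 : {w | G.Adj v w}.ncard = 3) :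
    ∀ w, G.Adj v w → w = a ∨ w = b ∨ w = c := by
  have hsub : ({a, b, c} : Set V) ⊆ {w | G.Adj v w} := by
    intro w hw
    simp only [Set.mem_insert_iff, Set.mem_singleton_iff] at hw
    rcases hw with rfl | rfl | rfl <;> assumption
  have h3' : ({a, b, c} : Set V).ncard = 3 := Set.ncard_eq_three.mpr ⟨a, b, c, hab, hac, hbc, rfl⟩
  have heq := Set.eq_of_subset_of_ncard_le hsub (by rw [h3, h3']) (Set.toFinite _)
  intro w hw
  have : w ∈ ({a, b, c} : Set V) := heq ▸ hw
  simpa using this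

private lemma nbhd_others {V : Type*} [Fintype V] (G : SimpleGraph V) (v a : V)
    (ha : G.Adj v a) (h3 : {w | G.Adj v w}.ncard = 3) :
    ∃ u1 u2 : V, G.Adj v u1 ∧ G.Adj v u2 ∧ u1 ≠ a ∧ u2 ≠ a ∧
      ∀ w, G.Adj v w → w = a ∨ w = u1 ∨ w = u2 := by
  obtain ⟨p, q, r, hpq, hpr, hqr, hset⟩ := Set.ncard_eq_three.mp h3
  have hmem : ∀ w, G.Adj v w ↔ w ∈ ({p, q, r} : Set V) := by
    intro w
    constructor
    · intro hw; rw [← hset]; exact hw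
    · intro hw; have : w ∈ {w | G.Adj v w} := hset ▸ hw; exact this
  have hap : G.Adj v p := (hmem p).mpr (by simp)
  have haq : G.Adj v q := (hmem q).mpr (by simp)
  have har : G.Adj v r := (hmem r).mpr (by simp)
  have hain : a = p ∨ a = q ∨ a = r := by simpa using (hmem a).mp ha
  rcases hain with rfl | rfl | rfl
  · exact ⟨q, r, haq, har, hpq.symm, hpr.symm, fun w hw => by simpa using (hmem w).mp hw⟩
  · refine ⟨p, r, hap, har, hpq, hqr.symm, fun w hw => ?_⟩
    have := (hmem w).mp hw
    simp only [Set.mem_insert_iff, Set.mem_singleton_iff] at this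
    tauto
  · refine ⟨p, q, hap, haq, hpr, hqr, fun w hw => ?_⟩
    have := (hmem w).mp hw
    simp only [Set.mem_insert_iff, Set.mem_singleton_iff] at this
    tauto

/-- Let `G` be a cubic graph containing two distinct 4-cycles `x x₁ x₂ y x`
and `x y x₃ x₄ x` sharing the edge `xy`, with `x, y, x₁, x₂, x₃, x₄` pairwise
distinct, and where the third neighbors `x₁', x₂', x₃', x₄'` of `x₁, x₂, x₃,
x₄` are pairwise distinct and distinct from `x, y, x₁, x₂, x₃, x₄`. If
`(G - xy)²` is `7`-colorable then `G²` is `7`-colorable. -/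
theorem colorable_square_of_two_squares_sharing_edge
    {V : Type*} [Fintype V] (G : SimpleGraph V)
    (hcubic : ∀ u : V, {w | G.Adj u w}.ncard = 3)
    (x y x₁ x₂ x₃ x₄ x₁' x₂' x₃' x₄' : V)
    (hdistinct : ([x, y, x₁, x₂, x₃, x₄, x₁', x₂', x₃', x₄'] : List V).Pairwise (· ≠ ·))
    (exy : G.Adj x y)
    (e1 : G.Adj x x₁) (e2 : G.Adj x₁ x₂) (e3 : G.Adj x₂ y)
    (e4 : G.Adj y x₃) (e5 : G.Adj x₃ x₄) (e6 : G.Adj x₄ x)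
    (t1 : G.Adj x₁ x₁') (t2 : G.Adj x₂ x₂') (t3 : G.Adj x₃ x₃') (t4 : G.Adj x₄ x₄')
    (h7 : (graphSquare (G.deleteEdges {s(x, y)})).Colorable 7) :
    (graphSquare G).Colorable 7 := by
  classical
  simp only [List.pairwise_cons, List.mem_cons, List.not_mem_nil, List.mem_singleton,
    forall_eq_or_imp, forall_eq, List.Pairwise.nil, and_true] at hdistinct
  obtain ⟨⟨dxy, dxx1, dxx2, dxx3, dxx4, dxp1, dxp2, dxp3, dxp4, -⟩,
    ⟨dyx1, dyx2, dyx3, dyx4, dyp1, dyp2, dyp3, dyp4, -⟩,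
    ⟨d12, d13, d14, d1p1, d1p2, d1p3, d1p4, -⟩,
    ⟨d23, d24, d2p1, d2p2, d2p3, d2p4, -⟩,
    ⟨d34, d3p1, d3p2, d3p3, d3p4, -⟩,
    ⟨d4p1, d4p2, d4p3, d4p4, -⟩,
    ⟨dp12, dp13, dp14, -⟩, ⟨dp23, dp24, -⟩, ⟨dp34, -⟩, -⟩ := hdistinct
  set D := G.deleteEdges {s(x, y)} with hDdef
  have hD : ∀ u v : V, D.Adj u v ↔ (G.Adj u v ∧ ¬(u = x ∧ v = y) ∧ ¬(u = y ∧ v = x)) := by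
    intro u v
    rw [hDdef, SimpleGraph.deleteEdges_adj]
    simp only [Set.mem_singleton_iff, Sym2.eq_iff]
    tauto
  have mkD : ∀ u v : V, G.Adj u v → ¬(u = x ∧ v = y) → ¬(u = y ∧ v = x) → D.Adj u v :=
    fun u v h h1 h2 => (hD u v).mpr ⟨h, h1, h2⟩
  -- neighborhoods in G
  have Gx : ∀ w, G.Adj x w → w = y ∨ w = x₁ ∨ w = x₄ :=
    nbhd_eq_three G x y x₁ x₄ exy e1 e6.symm dyx1 dyx4 d14 (hcubic x)
  have Gy : ∀ w, G.Adj y w → w = x ∨ w = x₂ ∨ w = x₃ :=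
    nbhd_eq_three G y x x₂ x₃ exy.symm e3.symm e4 dxx2 dxx3 d23 (hcubic y)
  have G1 : ∀ w, G.Adj x₁ w → w = x ∨ w = x₂ ∨ w = x₁' :=
    nbhd_eq_three G x₁ x x₂ x₁' e1.symm e2 t1 dxx2 dxp1 d2p1 (hcubic x₁)
  have G2 : ∀ w, G.Adj x₂ w → w = x₁ ∨ w = y ∨ w = x₂' :=
    nbhd_eq_three G x₂ x₁ y x₂' e2.symm e3 t2 dyx1.symm d1p2 dyp2 (hcubic x₂)
  have G3 : ∀ w, G.Adj x₃ w → w = y ∨ w = x₄ ∨ w = x₃' :=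
    nbhd_eq_three G x₃ y x₄ x₃' e4.symm e5 t3 dyx4 dyp3 d4p3 (hcubic x₃)
  have G4 : ∀ w, G.Adj x₄ w → w = x₃ ∨ w = x ∨ w = x₄' :=
    nbhd_eq_three G x₄ x₃ x x₄' e5.symm e6 t4 dxx3.symm d3p4 dxp4 (hcubic x₄)
  -- other neighbors of the primes
  obtain ⟨a1, a2, ha1, ha2, ha1n, ha2n, HP1⟩ := nbhd_others G x₁' x₁ t1.symm (hcubic x₁')
  obtain ⟨b1, b2, hb1, hb2, hb1n, hb2n, HP2⟩ := nbhd_others G x₂' x₂ t2.symm (hcubic x₂')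
  obtain ⟨d1, d2, hd1, hd2, hd1n, hd2n, HP3⟩ := nbhd_others G x₃' x₃ t3.symm (hcubic x₃')
  obtain ⟨f1, f2, hf1, hf2, hf1n, hf2n, HP4⟩ := nbhd_others G x₄' x₄ t4.symm (hcubic x₄')
  -- neighborhoods in D
  have Dx : ∀ w, D.Adj x w ↔ (w = x₁ ∨ w = x₄) := by
    intro w
    constructor
    · intro h
      obtain ⟨hadj, hn1, hn2⟩ := (hD x w).mp h
      rcases Gx w hadj with rfl | rfl | rfl
      · exact absurd ⟨rfl, rfl⟩ hn1
      · exact Or.inl rfl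
      · exact Or.inr rfl
    · rintro (rfl | rfl)
      · exact mkD _ _ e1 (fun hc => dyx1 hc.2.symm) (fun hc => dxy hc.1)
      · exact mkD _ _ e6.symm (fun hc => dyx4 hc.2.symm) (fun hc => dxy hc.1)
  have Dy : ∀ w, D.Adj y w ↔ (w = x₂ ∨ w = x₃) := by
    intro w
    constructor
    · intro h
      obtain ⟨hadj, hn1, hn2⟩ := (hD y w).mp h
      rcases Gy w hadj with rfl | rfl | rfl
      · exact absurd ⟨rfl, rfl⟩ hn2
      · exact Or.inl rfl
      · exact Or.inr rfl
    · rintro (rfl | rfl)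
      · exact mkD _ _ e3.symm (fun hc => dxy hc.1.symm) (fun hc => dxx2 hc.2.symm)
      · exact mkD _ _ e4 (fun hc => dxy hc.1.symm) (fun hc => dxx3 hc.2.symm)
  have D1 : ∀ w, D.Adj x₁ w ↔ (w = x ∨ w = x₂ ∨ w = x₁') := by
    intro w
    constructor
    · intro h
      exact G1 w ((hD x₁ w).mp h).1
    · rintro (rfl | rfl | rfl)
      · exact mkD _ _ e1.symm (fun hc => dxx1 hc.1.symm) (fun hc => dyx1 hc.1.symm)
      · exact mkD _ _ e2 (fun hc => dxx1 hc.1.symm) (fun hc => dyx1 hc.1.symm)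
      · exact mkD _ _ t1 (fun hc => dxx1 hc.1.symm) (fun hc => dyx1 hc.1.symm)
  have D2 : ∀ w, D.Adj x₂ w ↔ (w = x₁ ∨ w = y ∨ w = x₂') := by
    intro w
    constructor
    · intro h
      exact G2 w ((hD x₂ w).mp h).1
    · rintro (rfl | rfl | rfl)
      · exact mkD _ _ e2.symm (fun hc => dxx2 hc.1.symm) (fun hc => dyx2 hc.1.symm)
      · exact mkD _ _ e3 (fun hc => dxx2 hc.1.symm) (fun hc => dyx2 hc.1.symm)
      · exact mkD _ _ t2 (fun hc => dxx2 hc.1.symm) (fun hc => dyx2 hc.1.symm)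
  have D3 : ∀ w, D.Adj x₃ w ↔ (w = y ∨ w = x₄ ∨ w = x₃') := by
    intro w
    constructor
    · intro h
      exact G3 w ((hD x₃ w).mp h).1
    · rintro (rfl | rfl | rfl)
      · exact mkD _ _ e4.symm (fun hc => dxx3 hc.1.symm) (fun hc => dyx3 hc.1.symm)
      · exact mkD _ _ e5 (fun hc => dxx3 hc.1.symm) (fun hc => dyx3 hc.1.symm)
      · exact mkD _ _ t3 (fun hc => dxx3 hc.1.symm) (fun hc => dyx3 hc.1.symm)
  have D4 : ∀ w, D.Adj x₄ w ↔ (w = x₃ ∨ w = x ∨ w = x₄') := by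
    intro w
    constructor
    · intro h
      exact G4 w ((hD x₄ w).mp h).1
    · rintro (rfl | rfl | rfl)
      · exact mkD _ _ e5.symm (fun hc => dxx4 hc.1.symm) (fun hc => dyx4 hc.1.symm)
      · exact mkD _ _ e6 (fun hc => dxx4 hc.1.symm) (fun hc => dyx4 hc.1.symm)
      · exact mkD _ _ t4 (fun hc => dxx4 hc.1.symm) (fun hc => dyx4 hc.1.symm)
  have DP1 : ∀ w, D.Adj x₁' w → (w = x₁ ∨ w = a1 ∨ w = a2) :=
    fun w h => HP1 w ((hD x₁' w).mp h).1
  have DP2 : ∀ w, D.Adj x₂' w → (w = x₂ ∨ w = b1 ∨ w = b2) :=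
    fun w h => HP2 w ((hD x₂' w).mp h).1
  have DP3 : ∀ w, D.Adj x₃' w → (w = x₃ ∨ w = d1 ∨ w = d2) :=
    fun w h => HP3 w ((hD x₃' w).mp h).1
  have DP4 : ∀ w, D.Adj x₄' w → (w = x₄ ∨ w = f1 ∨ w = f2) :=
    fun w h => HP4 w ((hD x₄' w).mp h).1
    -- neighborhoods in the square S = graphSquare D
  have Sx : ∀ w, (graphSquare D).Adj x w →
      (w = x₁ ∨ w = x₂ ∨ w = x₃ ∨ w = x₄ ∨ w = x₁' ∨ w = x₄') := by
    rintro w ⟨hne, h | ⟨z, h1, h2⟩⟩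
    · rcases (Dx w).mp h with rfl | rfl
      · exact Or.inl rfl
      · exact Or.inr (Or.inr (Or.inr (Or.inl rfl)))
    · rcases (Dx z).mp h1 with rfl | rfl
      · rcases (D1 w).mp h2 with rfl | rfl | rfl
        · exact absurd rfl hne
        · exact Or.inr (Or.inl rfl)
        · exact Or.inr (Or.inr (Or.inr (Or.inr (Or.inl rfl))))
      · rcases (D4 w).mp h2 with rfl | rfl | rfl
        · exact Or.inr (Or.inr (Or.inl rfl))
        · exact absurd rfl hne
        · exact Or.inr (Or.inr (Or.inr (Or.inr (Or.inr rfl))))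
  have Sy : ∀ w, (graphSquare D).Adj y w →
      (w = x₁ ∨ w = x₂ ∨ w = x₃ ∨ w = x₄ ∨ w = x₂' ∨ w = x₃') := by
    rintro w ⟨hne, h | ⟨z, h1, h2⟩⟩
    · rcases (Dy w).mp h with rfl | rfl
      · exact Or.inr (Or.inl rfl)
      · exact Or.inr (Or.inr (Or.inl rfl))
    · rcases (Dy z).mp h1 with rfl | rfl
      · rcases (D2 w).mp h2 with rfl | rfl | rfl
        · exact Or.inl rfl
        · exact absurd rfl hne
        · exact Or.inr (Or.inr (Or.inr (Or.inr (Or.inl rfl))))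
      · rcases (D3 w).mp h2 with rfl | rfl | rfl
        · exact absurd rfl hne
        · exact Or.inr (Or.inr (Or.inr (Or.inl rfl)))
        · exact Or.inr (Or.inr (Or.inr (Or.inr (Or.inr rfl))))
  have S1 : ∀ w, (graphSquare D).Adj x₁ w →
      (w = x ∨ w = y ∨ w = x₂ ∨ w = x₄ ∨ w = x₁' ∨ w = x₂' ∨ w = a1 ∨ w = a2) := by
    rintro w ⟨hne, h | ⟨z, h1, h2⟩⟩
    · rcases (D1 w).mp h with rfl | rfl | rfl
      · exact Or.inl rfl
      · exact Or.inr (Or.inr (Or.inl rfl))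
      · exact Or.inr (Or.inr (Or.inr (Or.inr (Or.inl rfl))))
    · rcases (D1 z).mp h1 with rfl | rfl | rfl
      · rcases (Dx w).mp h2 with rfl | rfl
        · exact absurd rfl hne
        · exact Or.inr (Or.inr (Or.inr (Or.inl rfl)))
      · rcases (D2 w).mp h2 with rfl | rfl | rfl
        · exact absurd rfl hne
        · exact Or.inr (Or.inl rfl)
        · exact Or.inr (Or.inr (Or.inr (Or.inr (Or.inr (Or.inl rfl)))))
      · rcases DP1 w h2 with rfl | rfl | rfl
        · exact absurd rfl hne
        · exact Or.inr (Or.inr (Or.inr (Or.inr (Or.inr (Or.inr (Or.inl rfl))))))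
        · exact Or.inr (Or.inr (Or.inr (Or.inr (Or.inr (Or.inr (Or.inr rfl))))))
  have S2 : ∀ w, (graphSquare D).Adj x₂ w →
      (w = x ∨ w = y ∨ w = x₁ ∨ w = x₃ ∨ w = x₂' ∨ w = x₁' ∨ w = b1 ∨ w = b2) := by
    rintro w ⟨hne, h | ⟨z, h1, h2⟩⟩
    · rcases (D2 w).mp h with rfl | rfl | rfl
      · exact Or.inr (Or.inr (Or.inl rfl))
      · exact Or.inr (Or.inl rfl)
      · exact Or.inr (Or.inr (Or.inr (Or.inr (Or.inl rfl))))
    · rcases (D2 z).mp h1 with rfl | rfl | rfl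
      · rcases (D1 w).mp h2 with rfl | rfl | rfl
        · exact Or.inl rfl
        · exact absurd rfl hne
        · exact Or.inr (Or.inr (Or.inr (Or.inr (Or.inr (Or.inl rfl)))))
      · rcases (Dy w).mp h2 with rfl | rfl
        · exact absurd rfl hne
        · exact Or.inr (Or.inr (Or.inr (Or.inl rfl)))
      · rcases DP2 w h2 with rfl | rfl | rfl
        · exact absurd rfl hne
        · exact Or.inr (Or.inr (Or.inr (Or.inr (Or.inr (Or.inr (Or.inl rfl))))))
        · exact Or.inr (Or.inr (Or.inr (Or.inr (Or.inr (Or.inr (Or.inr rfl))))))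
  have S3 : ∀ w, (graphSquare D).Adj x₃ w →
      (w = x ∨ w = y ∨ w = x₂ ∨ w = x₄ ∨ w = x₃' ∨ w = x₄' ∨ w = d1 ∨ w = d2) := by
    rintro w ⟨hne, h | ⟨z, h1, h2⟩⟩
    · rcases (D3 w).mp h with rfl | rfl | rfl
      · exact Or.inr (Or.inl rfl)
      · exact Or.inr (Or.inr (Or.inr (Or.inl rfl)))
      · exact Or.inr (Or.inr (Or.inr (Or.inr (Or.inl rfl))))
    · rcases (D3 z).mp h1 with rfl | rfl | rfl
      · rcases (Dy w).mp h2 with rfl | rfl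
        · exact Or.inr (Or.inr (Or.inl rfl))
        · exact absurd rfl hne
      · rcases (D4 w).mp h2 with rfl | rfl | rfl
        · exact absurd rfl hne
        · exact Or.inl rfl
        · exact Or.inr (Or.inr (Or.inr (Or.inr (Or.inr (Or.inl rfl)))))
      · rcases DP3 w h2 with rfl | rfl | rfl
        · exact absurd rfl hne
        · exact Or.inr (Or.inr (Or.inr (Or.inr (Or.inr (Or.inr (Or.inl rfl))))))
        · exact Or.inr (Or.inr (Or.inr (Or.inr (Or.inr (Or.inr (Or.inr rfl))))))
  have S4 : ∀ w, (graphSquare D).Adj x₄ w →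
      (w = x ∨ w = y ∨ w = x₁ ∨ w = x₃ ∨ w = x₄' ∨ w = x₃' ∨ w = f1 ∨ w = f2) := by
    rintro w ⟨hne, h | ⟨z, h1, h2⟩⟩
    · rcases (D4 w).mp h with rfl | rfl | rfl
      · exact Or.inr (Or.inr (Or.inr (Or.inl rfl)))
      · exact Or.inl rfl
      · exact Or.inr (Or.inr (Or.inr (Or.inr (Or.inl rfl))))
    · rcases (D4 z).mp h1 with rfl | rfl | rfl
      · rcases (D3 w).mp h2 with rfl | rfl | rfl
        · exact Or.inr (Or.inl rfl)
        · exact absurd rfl hne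
        · exact Or.inr (Or.inr (Or.inr (Or.inr (Or.inr (Or.inl rfl)))))
      · rcases (Dx w).mp h2 with rfl | rfl
        · exact Or.inr (Or.inr (Or.inl rfl))
        · exact absurd rfl hne
      · rcases DP4 w h2 with rfl | rfl | rfl
        · exact absurd rfl hne
        · exact Or.inr (Or.inr (Or.inr (Or.inr (Or.inr (Or.inr (Or.inl rfl))))))
        · exact Or.inr (Or.inr (Or.inr (Or.inr (Or.inr (Or.inr (Or.inr rfl))))))
  -- the unknown neighbors of the primes are outside the six special vertices
  have hout1 : ∀ w, G.Adj x₁' w → w ≠ x₁ →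
      (w ≠ x ∧ w ≠ y ∧ w ≠ x₂ ∧ w ≠ x₃ ∧ w ≠ x₄) := by
    intro w hw hne
    refine ⟨?_, ?_, ?_, ?_, ?_⟩ <;> rintro rfl
    · rcases Gx x₁' hw.symm with h | h | h
      exacts [dyp1 h.symm, d1p1 h.symm, d4p1 h.symm]
    · rcases Gy x₁' hw.symm with h | h | h
      exacts [dxp1 h.symm, d2p1 h.symm, d3p1 h.symm]
    · rcases G2 x₁' hw.symm with h | h | h
      exacts [d1p1 h.symm, dyp1 h.symm, dp12 h]
    · rcases G3 x₁' hw.symm with h | h | h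
      exacts [dyp1 h.symm, d4p1 h.symm, dp13 h]
    · rcases G4 x₁' hw.symm with h | h | h
      exacts [d3p1 h.symm, dxp1 h.symm, dp14 h]
  have hout2 : ∀ w, G.Adj x₂' w → w ≠ x₂ →
      (w ≠ x ∧ w ≠ y ∧ w ≠ x₁ ∧ w ≠ x₃ ∧ w ≠ x₄) := by
    intro w hw hne
    refine ⟨?_, ?_, ?_, ?_, ?_⟩ <;> rintro rfl
    · rcases Gx x₂' hw.symm with h | h | h
      exacts [dyp2 h.symm, d1p2 h.symm, d4p2 h.symm]
    · rcases Gy x₂' hw.symm with h | h | h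
      exacts [dxp2 h.symm, d2p2 h.symm, d3p2 h.symm]
    · rcases G1 x₂' hw.symm with h | h | h
      exacts [dxp2 h.symm, d2p2 h.symm, dp12 h.symm]
    · rcases G3 x₂' hw.symm with h | h | h
      exacts [dyp2 h.symm, d4p2 h.symm, dp23 h]
    · rcases G4 x₂' hw.symm with h | h | h
      exacts [d3p2 h.symm, dxp2 h.symm, dp24 h]
  have hout3 : ∀ w, G.Adj x₃' w → w ≠ x₃ →
      (w ≠ x ∧ w ≠ y ∧ w ≠ x₁ ∧ w ≠ x₂ ∧ w ≠ x₄) := by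
    intro w hw hne
    refine ⟨?_, ?_, ?_, ?_, ?_⟩ <;> rintro rfl
    · rcases Gx x₃' hw.symm with h | h | h
      exacts [dyp3 h.symm, d1p3 h.symm, d4p3 h.symm]
    · rcases Gy x₃' hw.symm with h | h | h
      exacts [dxp3 h.symm, d2p3 h.symm, d3p3 h.symm]
    · rcases G1 x₃' hw.symm with h | h | h
      exacts [dxp3 h.symm, d2p3 h.symm, dp13 h.symm]
    · rcases G2 x₃' hw.symm with h | h | h
      exacts [d1p3 h.symm, dyp3 h.symm, dp23 h.symm]
    · rcases G4 x₃' hw.symm with h | h | h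
      exacts [d3p3 h.symm, dxp3 h.symm, dp34 h]
  have hout4 : ∀ w, G.Adj x₄' w → w ≠ x₄ →
      (w ≠ x ∧ w ≠ y ∧ w ≠ x₁ ∧ w ≠ x₂ ∧ w ≠ x₃) := by
    intro w hw hne
    refine ⟨?_, ?_, ?_, ?_, ?_⟩ <;> rintro rfl
    · rcases Gx x₄' hw.symm with h | h | h
      exacts [dyp4 h.symm, d1p4 h.symm, d4p4 h.symm]
    · rcases Gy x₄' hw.symm with h | h | h
      exacts [dxp4 h.symm, d2p4 h.symm, d3p4 h.symm]
    · rcases G1 x₄' hw.symm with h | h | h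
      exacts [dxp4 h.symm, d2p4 h.symm, dp14 h.symm]
    · rcases G2 x₄' hw.symm with h | h | h
      exacts [d1p4 h.symm, dyp4 h.symm, dp24 h.symm]
    · rcases G3 x₄' hw.symm with h | h | h
      exacts [dyp4 h.symm, d4p4 h.symm, dp34 h.symm]
  obtain ⟨na1x, na1y, na12, na13, na14⟩ := hout1 a1 ha1 ha1n
  obtain ⟨na2x, na2y, na22, na23, na24⟩ := hout1 a2 ha2 ha2n
  obtain ⟨nb1x, nb1y, nb11, nb13, nb14⟩ := hout2 b1 hb1 hb1n
  obtain ⟨nb2x, nb2y, nb21, nb23, nb24⟩ := hout2 b2 hb2 hb2n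
  obtain ⟨nd1x, nd1y, nd11, nd12, nd14⟩ := hout3 d1 hd1 hd1n
  obtain ⟨nd2x, nd2y, nd21, nd22, nd24⟩ := hout3 d2 hd2 hd2n
  obtain ⟨nf1x, nf1y, nf11, nf12, nf13⟩ := hout4 f1 hf1 hf1n
  obtain ⟨nf2x, nf2y, nf21, nf22, nf23⟩ := hout4 f2 hf2 hf2n
  -- positive adjacencies in the square, used in N1
  have sxx2 : (graphSquare D).Adj x x₂ :=
    ⟨dxx2, Or.inr ⟨x₁, (Dx x₁).mpr (Or.inl rfl), (D1 x₂).mpr (Or.inr (Or.inl rfl))⟩⟩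
  have sxx3 : (graphSquare D).Adj x x₃ :=
    ⟨dxx3, Or.inr ⟨x₄, (Dx x₄).mpr (Or.inr rfl), (D4 x₃).mpr (Or.inl rfl)⟩⟩
  have syx1 : (graphSquare D).Adj y x₁ :=
    ⟨dyx1, Or.inr ⟨x₂, (Dy x₂).mpr (Or.inl rfl), (D2 x₁).mpr (Or.inl rfl)⟩⟩
  have syx4 : (graphSquare D).Adj y x₄ :=
    ⟨dyx4, Or.inr ⟨x₃, (Dy x₃).mpr (Or.inr rfl), (D3 x₄).mpr (Or.inr (Or.inl rfl))⟩⟩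
  -- the square of G only adds the edge xy to the square of D
  have N1 : ∀ u v, (graphSquare G).Adj u v →
      ((graphSquare D).Adj u v ∨ (u = x ∧ v = y) ∨ (u = y ∧ v = x)) := by
    rintro u v ⟨hne, hGuv | ⟨z, h1, h2⟩⟩
    · by_cases hxy1 : u = x ∧ v = y
      · exact Or.inr (Or.inl hxy1)
      · by_cases hxy2 : u = y ∧ v = x
        · exact Or.inr (Or.inr hxy2)
        · exact Or.inl ⟨hne, Or.inl ((hD u v).mpr ⟨hGuv, hxy1, hxy2⟩)⟩
    · by_cases hA : (u = x ∧ z = y) ∨ (u = y ∧ z = x)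
      · rcases hA with ⟨rfl, rfl⟩ | ⟨rfl, rfl⟩
        · rcases Gy v h2 with rfl | rfl | rfl
          · exact absurd rfl hne
          · exact Or.inl sxx2
          · exact Or.inl sxx3
        · rcases Gx v h2 with rfl | rfl | rfl
          · exact absurd rfl hne
          · exact Or.inl syx1
          · exact Or.inl syx4
      · by_cases hB : (z = x ∧ v = y) ∨ (z = y ∧ v = x)
        · rcases hB with ⟨rfl, rfl⟩ | ⟨rfl, rfl⟩
          · rcases Gx u h1.symm with rfl | rfl | rfl
            · exact absurd rfl hne
            · exact Or.inl syx1.symm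
            · exact Or.inl syx4.symm
          · rcases Gy u h1.symm with rfl | rfl | rfl
            · exact absurd rfl hne
            · exact Or.inl sxx2.symm
            · exact Or.inl sxx3.symm
        · refine Or.inl ⟨hne, Or.inr ⟨z, (hD u z).mpr ⟨h1, ?_, ?_⟩, (hD z v).mpr ⟨h2, ?_, ?_⟩⟩⟩
          · exact fun hc => hA (Or.inl hc)
          · exact fun hc => hA (Or.inr ⟨hc.1, hc.2⟩)
          · exact fun hc => hB (Or.inl hc)
          · exact fun hc => hB (Or.inr ⟨hc.1, hc.2⟩)
    -- the coloring of the square of D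
  obtain ⟨C⟩ := h7
  by_cases hCxy : C x = C y
  · -- hard case: recolor x, y, x₁, x₂, x₃, x₄
    obtain ⟨c1, c2, c3, c4, cx, cy, ⟨g1a,g1b,g1c,g1d⟩, ⟨g2a,g2b,g2c,g2d⟩, ⟨g3a,g3b,g3c,g3d⟩,
      ⟨g4a,g4b,g4c,g4d⟩, ⟨adj12, adj23, adj34, adj41⟩, ⟨X1,X2,X3,X4,Xa,Xb,Xxy⟩,
      ⟨Y1,Y2,Y3,Y4,Yg,Yd⟩⟩ :=
      select_colors (C x₁') (C x₄') (C x₂') (C x₃') (C a1) (C a2) (C b1) (C b2)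
        (C d1) (C d2) (C f1) (C f2)
    set c' : V → Fin 7 := fun v =>
      if v = x then cx else if v = y then cy else if v = x₁ then c1
      else if v = x₂ then c2 else if v = x₃ then c3 else if v = x₄ then c4 else C v with hc'
    have Ex : c' x = cx := by simp [hc']
    have Ey : c' y = cy := by simp [hc', Ne.symm dxy]
    have E1 : c' x₁ = c1 := by simp [hc', Ne.symm dxx1, Ne.symm dyx1]
    have E2 : c' x₂ = c2 := by simp [hc', Ne.symm dxx2, Ne.symm dyx2, Ne.symm d12]
    have E3 : c' x₃ = c3 := by
      simp [hc', Ne.symm dxx3, Ne.symm dyx3, Ne.symm d13, Ne.symm d23]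
    have E4 : c' x₄ = c4 := by
      simp [hc', Ne.symm dxx4, Ne.symm dyx4, Ne.symm d14, Ne.symm d24, Ne.symm d34]
    have Eout : ∀ w, w ≠ x → w ≠ y → w ≠ x₁ → w ≠ x₂ → w ≠ x₃ → w ≠ x₄ → c' w = C w := by
      intro w h1 h2 h3 h4 h5 h6
      simp [hc', h1, h2, h3, h4, h5, h6]
    refine ⟨SimpleGraph.Coloring.mk c' ?_⟩
    intro u v huv
    rcases N1 u v huv with hS | ⟨rfl, rfl⟩ | ⟨rfl, rfl⟩
    · by_cases hux : u = x
      · subst hux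
        rcases Sx v hS with rfl | rfl | rfl | rfl | rfl | rfl
        · rw [Ex, E1]; exact X1
        · rw [Ex, E2]; exact X2
        · rw [Ex, E3]; exact X3
        · rw [Ex, E4]; exact X4
        · rw [Ex, Eout v (Ne.symm dxp1) (Ne.symm dyp1) (Ne.symm d1p1) (Ne.symm d2p1)
            (Ne.symm d3p1) (Ne.symm d4p1)]; exact Xa
        · rw [Ex, Eout v (Ne.symm dxp4) (Ne.symm dyp4) (Ne.symm d1p4) (Ne.symm d2p4)
            (Ne.symm d3p4) (Ne.symm d4p4)]; exact Xb
      by_cases huy : u = y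
      · subst huy
        rcases Sy v hS with rfl | rfl | rfl | rfl | rfl | rfl
        · rw [Ey, E1]; exact Y1
        · rw [Ey, E2]; exact Y2
        · rw [Ey, E3]; exact Y3
        · rw [Ey, E4]; exact Y4
        · rw [Ey, Eout v (Ne.symm dxp2) (Ne.symm dyp2) (Ne.symm d1p2) (Ne.symm d2p2)
            (Ne.symm d3p2) (Ne.symm d4p2)]; exact Yg
        · rw [Ey, Eout v (Ne.symm dxp3) (Ne.symm dyp3) (Ne.symm d1p3) (Ne.symm d2p3)
            (Ne.symm d3p3) (Ne.symm d4p3)]; exact Yd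
      by_cases hu1 : u = x₁
      · subst hu1
        rcases S1 v hS with rfl | rfl | rfl | rfl | rfl | rfl | rfl | rfl
        · rw [E1, Ex]; exact Ne.symm X1
        · rw [E1, Ey]; exact Ne.symm Y1
        · rw [E1, E2]; exact adj12
        · rw [E1, E4]; exact Ne.symm adj41
        · rw [E1, Eout v (Ne.symm dxp1) (Ne.symm dyp1) (Ne.symm d1p1) (Ne.symm d2p1)
            (Ne.symm d3p1) (Ne.symm d4p1)]; exact g1a
        · rw [E1, Eout v (Ne.symm dxp2) (Ne.symm dyp2) (Ne.symm d1p2) (Ne.symm d2p2)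
            (Ne.symm d3p2) (Ne.symm d4p2)]; exact g1b
        · rw [E1, Eout v na1x na1y ha1n na12 na13 na14]; exact g1c
        · rw [E1, Eout v na2x na2y ha2n na22 na23 na24]; exact g1d
      by_cases hu2 : u = x₂
      · subst hu2
        rcases S2 v hS with rfl | rfl | rfl | rfl | rfl | rfl | rfl | rfl
        · rw [E2, Ex]; exact Ne.symm X2
        · rw [E2, Ey]; exact Ne.symm Y2
        · rw [E2, E1]; exact Ne.symm adj12
        · rw [E2, E3]; exact adj23
        · rw [E2, Eout v (Ne.symm dxp2) (Ne.symm dyp2) (Ne.symm d1p2) (Ne.symm d2p2)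
            (Ne.symm d3p2) (Ne.symm d4p2)]; exact g2a
        · rw [E2, Eout v (Ne.symm dxp1) (Ne.symm dyp1) (Ne.symm d1p1) (Ne.symm d2p1)
            (Ne.symm d3p1) (Ne.symm d4p1)]; exact g2b
        · rw [E2, Eout v nb1x nb1y nb11 hb1n nb13 nb14]; exact g2c
        · rw [E2, Eout v nb2x nb2y nb21 hb2n nb23 nb24]; exact g2d
      by_cases hu3 : u = x₃
      · subst hu3
        rcases S3 v hS with rfl | rfl | rfl | rfl | rfl | rfl | rfl | rfl
        · rw [E3, Ex]; exact Ne.symm X3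
        · rw [E3, Ey]; exact Ne.symm Y3
        · rw [E3, E2]; exact Ne.symm adj23
        · rw [E3, E4]; exact adj34
        · rw [E3, Eout v (Ne.symm dxp3) (Ne.symm dyp3) (Ne.symm d1p3) (Ne.symm d2p3)
            (Ne.symm d3p3) (Ne.symm d4p3)]; exact g3a
        · rw [E3, Eout v (Ne.symm dxp4) (Ne.symm dyp4) (Ne.symm d1p4) (Ne.symm d2p4)
            (Ne.symm d3p4) (Ne.symm d4p4)]; exact g3b
        · rw [E3, Eout v nd1x nd1y nd11 nd12 hd1n nd14]; exact g3c
        · rw [E3, Eout v nd2x nd2y nd21 nd22 hd2n nd24]; exact g3d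
      by_cases hu4 : u = x₄
      · subst hu4
        rcases S4 v hS with rfl | rfl | rfl | rfl | rfl | rfl | rfl | rfl
        · rw [E4, Ex]; exact Ne.symm X4
        · rw [E4, Ey]; exact Ne.symm Y4
        · rw [E4, E1]; exact adj41
        · rw [E4, E3]; exact Ne.symm adj34
        · rw [E4, Eout v (Ne.symm dxp4) (Ne.symm dyp4) (Ne.symm d1p4) (Ne.symm d2p4)
            (Ne.symm d3p4) (Ne.symm d4p4)]; exact g4a
        · rw [E4, Eout v (Ne.symm dxp3) (Ne.symm dyp3) (Ne.symm d1p3) (Ne.symm d2p3)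
            (Ne.symm d3p3) (Ne.symm d4p3)]; exact g4b
        · rw [E4, Eout v nf1x nf1y nf11 nf12 nf13 hf1n]; exact g4c
        · rw [E4, Eout v nf2x nf2y nf21 nf22 nf23 hf2n]; exact g4d
      · -- u is an untouched vertex
        have hEu : c' u = C u := Eout u hux huy hu1 hu2 hu3 hu4
        by_cases hvx : v = x
        · subst hvx
          rcases Sx u hS.symm with rfl | rfl | rfl | rfl | rfl | rfl
          · exact absurd rfl hu1
          · exact absurd rfl hu2
          · exact absurd rfl hu3
          · exact absurd rfl hu4
          · rw [hEu, Ex]; exact Ne.symm Xa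
          · rw [hEu, Ex]; exact Ne.symm Xb
        by_cases hvy : v = y
        · subst hvy
          rcases Sy u hS.symm with rfl | rfl | rfl | rfl | rfl | rfl
          · exact absurd rfl hu1
          · exact absurd rfl hu2
          · exact absurd rfl hu3
          · exact absurd rfl hu4
          · rw [hEu, Ey]; exact Ne.symm Yg
          · rw [hEu, Ey]; exact Ne.symm Yd
        by_cases hv1 : v = x₁
        · subst hv1
          rcases S1 u hS.symm with rfl | rfl | rfl | rfl | rfl | rfl | rfl | rfl
          · exact absurd rfl hux
          · exact absurd rfl huy
          · exact absurd rfl hu2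
          · exact absurd rfl hu4
          · rw [hEu, E1]; exact Ne.symm g1a
          · rw [hEu, E1]; exact Ne.symm g1b
          · rw [hEu, E1]; exact Ne.symm g1c
          · rw [hEu, E1]; exact Ne.symm g1d
        by_cases hv2 : v = x₂
        · subst hv2
          rcases S2 u hS.symm with rfl | rfl | rfl | rfl | rfl | rfl | rfl | rfl
          · exact absurd rfl hux
          · exact absurd rfl huy
          · exact absurd rfl hu1
          · exact absurd rfl hu3
          · rw [hEu, E2]; exact Ne.symm g2a
          · rw [hEu, E2]; exact Ne.symm g2b
          · rw [hEu, E2]; exact Ne.symm g2c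
          · rw [hEu, E2]; exact Ne.symm g2d
        by_cases hv3 : v = x₃
        · subst hv3
          rcases S3 u hS.symm with rfl | rfl | rfl | rfl | rfl | rfl | rfl | rfl
          · exact absurd rfl hux
          · exact absurd rfl huy
          · exact absurd rfl hu2
          · exact absurd rfl hu4
          · rw [hEu, E3]; exact Ne.symm g3a
          · rw [hEu, E3]; exact Ne.symm g3b
          · rw [hEu, E3]; exact Ne.symm g3c
          · rw [hEu, E3]; exact Ne.symm g3d
        by_cases hv4 : v = x₄
        · subst hv4
          rcases S4 u hS.symm with rfl | rfl | rfl | rfl | rfl | rfl | rfl | rfl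
          · exact absurd rfl hux
          · exact absurd rfl huy
          · exact absurd rfl hu1
          · exact absurd rfl hu3
          · rw [hEu, E4]; exact Ne.symm g4a
          · rw [hEu, E4]; exact Ne.symm g4b
          · rw [hEu, E4]; exact Ne.symm g4c
          · rw [hEu, E4]; exact Ne.symm g4d
        · rw [hEu, Eout v hvx hvy hv1 hv2 hv3 hv4]
          exact C.valid hS
    · rw [Ex, Ey]; exact Xxy
    · rw [Ey, Ex]; exact fun h => Xxy h.symm
  · -- easy case : C x ≠ C y, the coloring C itself works
    refine ⟨SimpleGraph.Coloring.mk (fun v => C v) ?_⟩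
    intro u v huv
    rcases N1 u v huv with hS | ⟨rfl, rfl⟩ | ⟨rfl, rfl⟩
    · exact C.valid hS
    · exact hCxy
    · exact fun h => hCxy h.symm
end
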